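/- arXiv:1302.2986 — 12 statements merged into one kernel-verified Lean document; each statement's English description precedes it below -/
import Mathlib

section
/- B_r is the unique (up to isomorphism) r-regular bipartite totally silver graph of order 2r+2. -/
/-- A totally silver coloring: each of the `k` colors appears exactly once on every
closed neighborhood `N[v]`. -/
def IsTotallySilver {V : Type*} {k : ℕ} (G : SimpleGraph V) (c : V → Fin k) : Prop :=
  ∀ v : V, ∀ i : Fin k, ∃! w : V, (w = v ∨ G.Adj v w) ∧ c w = i

/-- The graph \`B r\`: \`K_{r+1,r+1}\` minus a perfect matching. \`x i = Sum.inl i\` is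
adjacent to \`y j = Sum.inr j\` iff \`i ≠ j\`. -/
def B (r : ℕ) : SimpleGraph (Fin (r + 1) ⊕ Fin (r + 1)) where
  Adj u v := Sum.elim id id u ≠ Sum.elim id id v ∧ u.isLeft ≠ v.isLeft
  symm := ⟨fun u v h => ⟨h.1.symm, h.2.symm⟩⟩
  loopless := ⟨fun u h => h.2 rfl⟩

instance (r : ℕ) : DecidableRel (B r).Adj := fun u v =>
  inferInstanceAs (Decidable (Sum.elim id id u ≠ Sum.elim id id v ∧ u.isLeft ≠ v.isLeft))

open Finset SimpleGraph

lemma silver_proper {V : Type*} {k : ℕ} {G : SimpleGraph V} {c : V → Fin k}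
    (hs : IsTotallySilver G c) {u v : V} (huv : G.Adj u v) : c u ≠ c v := by
  intro hc
  obtain ⟨w, _, hw⟩ := hs u (c v)
  have h1 := hw u ⟨Or.inl rfl, hc⟩
  have h2 := hw v ⟨Or.inr huv, rfl⟩
  have h3 : u = v := h1.trans h2.symm
  subst h3
  exact G.loopless.irrefl u huv

lemma class_card {V : Type*} [Fintype V] [DecidableEq V] {r : ℕ}
    {G : SimpleGraph V} [DecidableRel G.Adj]
    (hcard : Fintype.card V = 2 * r + 2)
    (hreg : G.IsRegularOfDegree r)
    {c : V → Fin (r + 1)} (hs : IsTotallySilver G c) (i : Fin (r + 1)) :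
    (univ.filter (fun v => c v = i)).card = 2 := by
  have key : ∀ v : V, (univ.filter (fun w => (w = v ∨ G.Adj v w) ∧ c w = i)).card = 1 := by
    intro v
    obtain ⟨w, hw, huniq⟩ := hs v i
    rw [Finset.card_eq_one]
    refine ⟨w, Finset.eq_singleton_iff_unique_mem.2
      ⟨Finset.mem_filter.2 ⟨Finset.mem_univ _, hw⟩, ?_⟩⟩
    intro x hx
    exact huniq x (by simpa using hx)
  have h1 : ∑ v : V, (univ.filter (fun w => (w = v ∨ G.Adj v w) ∧ c w = i)).card
      = Fintype.card V := by
    rw [Fintype.card_eq_sum_ones]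
    exact Finset.sum_congr rfl fun v _ => key v
  have hnbhd : ∀ w : V, (univ.filter (fun v : V => (w = v ∨ G.Adj v w))).card = r + 1 := by
    intro w
    have he : univ.filter (fun v : V => (w = v ∨ G.Adj v w)) = insert w (G.neighborFinset w) := by
      ext z
      simp [eq_comm, G.adj_comm]
    rw [he, Finset.card_insert_of_notMem (by simp), SimpleGraph.card_neighborFinset_eq_degree,
      hreg w]
  have h2 : ∑ v : V, (univ.filter (fun w => (w = v ∨ G.Adj v w) ∧ c w = i)).card
      = (univ.filter (fun v => c v = i)).card * (r + 1) := by
    simp only [Finset.card_filter]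
    rw [Finset.sum_comm]
    have step : ∀ w : V, ∑ v : V, (if (w = v ∨ G.Adj v w) ∧ c w = i then 1 else 0)
        = (if c w = i then (r+1) else 0) := by
      intro w
      by_cases hw : c w = i
      · simp only [hw, and_true, if_true]
        rw [← hnbhd w, Finset.card_filter]
      · simp [hw]
    rw [Finset.sum_congr rfl (fun w _ => step w), ← Finset.sum_filter, Finset.sum_const,
      smul_eq_mul, Finset.card_filter]
  rw [h1, hcard] at h2
  have h3 : 2 * (r + 1) = (univ.filter (fun v => c v = i)).card * (r + 1) := by omega
  exact (Nat.eq_of_mul_eq_mul_right (Nat.succ_pos r) h3.symm)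

lemma B_adj {r : ℕ} (u v : Fin (r+1) ⊕ Fin (r+1)) :
    (B r).Adj u v ↔ (Sum.elim id id u ≠ Sum.elim id id v ∧ u.isLeft ≠ v.isLeft) := Iff.rfl

lemma fin2_eq (x y z : Fin 2) (h1 : x ≠ z) (h2 : y ≠ z) : x = y := by
  fin_cases x <;> fin_cases y <;> fin_cases z <;> simp_all

lemma build_iso {V : Type*} [Fintype V] {r : ℕ}
    {G : SimpleGraph V} [DecidableRel G.Adj]
    (hcard : Fintype.card V = 2 * r + 2)
    {c : V → Fin (r + 1)} (hs : IsTotallySilver G c)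
    {cb : V → Fin 2} (hproper : ∀ u v, G.Adj u v → cb u ≠ cb v)
    (hsplit : ∀ u v, c u = c v → cb u = cb v → u = v) :
    Nonempty (G ≃g B r) := by
  classical
  set f : V → Fin (r + 1) ⊕ Fin (r + 1) :=
    fun v => if cb v = 0 then Sum.inl (c v) else Sum.inr (c v) with hf
  have hinj : Function.Injective f := by
    intro u v huv
    by_cases hu : cb u = 0 <;> by_cases hv : cb v = 0 <;>
      simp only [hf, hu, hv, if_true, if_false, if_pos, if_neg] at huv <;>
      simp [hu, hv] at huv
    · exact hsplit u v huv (hu.trans hv.symm)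
    · exact hsplit u v huv (fin2_eq _ _ _ hu hv ▸ rfl)
  have hinj2 : ∀ u v, cb u ≠ 0 → cb v ≠ 0 → cb u = cb v := fun u v h1 h2 =>
    fin2_eq _ _ _ h1 h2
  have hbij : Function.Bijective f := by
    rw [Fintype.bijective_iff_injective_and_card]
    refine ⟨hinj, ?_⟩
    simp [hcard]
    ring
  have hadj : ∀ u v : V, c u ≠ c v → cb u ≠ cb v → G.Adj u v := by
    intro u v hc hcb
    obtain ⟨w, ⟨hw1, hw2⟩, _⟩ := hs u (c v)
    have hne : w ≠ u := fun h => hc (by rw [← h, hw2])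
    have hadj' : G.Adj u w := hw1.resolve_left hne
    have hcw : cb w = cb v := fin2_eq _ _ _ (Ne.symm (hproper u w hadj')) (Ne.symm hcb)
    have : w = v := hsplit w v hw2 hcw
    exact this ▸ hadj'
  refine ⟨{ toEquiv := Equiv.ofBijective f hbij, map_rel_iff' := ?_ }⟩
  intro u v
  show (B r).Adj (f u) (f v) ↔ G.Adj u v
  by_cases hu : cb u = 0 <;> by_cases hv : cb v = 0
  · simp only [hf, if_pos hu, if_pos hv, B_adj, Sum.isLeft_inl, ne_eq, not_true_eq_false,
      and_false, false_iff]
    intro h; exact absurd (hu.trans hv.symm) (hproper u v h)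
  · simp only [hf, if_pos hu, if_neg hv, B_adj, Sum.elim_inl, Sum.elim_inr, Sum.isLeft_inl,
      Sum.isLeft_inr, id_eq]
    constructor
    · rintro ⟨h, -⟩; exact hadj u v h (by rw [hu]; exact Ne.symm hv)
    · intro h; exact ⟨silver_proper hs h, by simp⟩
  · simp only [hf, if_neg hu, if_pos hv, B_adj, Sum.elim_inl, Sum.elim_inr, Sum.isLeft_inl,
      Sum.isLeft_inr, id_eq]
    constructor
    · rintro ⟨h, -⟩; exact hadj u v h (by rw [hv]; exact hu)
    · intro h; exact ⟨silver_proper hs h, by simp⟩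
  · simp only [hf, if_neg hu, if_neg hv, B_adj, Sum.isLeft_inr, ne_eq, not_true_eq_false,
      and_false, false_iff]
    intro h; exact absurd (hinj2 u v hu hv) (hproper u v h)

lemma split_of_two_le {V : Type*} [Fintype V] [DecidableEq V] {r : ℕ} (hr : 2 ≤ r)
    {G : SimpleGraph V} [DecidableRel G.Adj]
    (hcard : Fintype.card V = 2 * r + 2)
    (hreg : G.IsRegularOfDegree r)
    {c : V → Fin (r + 1)} (hs : IsTotallySilver G c)
    {cb : V → Fin 2} (hproper : ∀ u v, G.Adj u v → cb u ≠ cb v) :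
    ∀ u v, c u = c v → cb u = cb v → u = v := by
  intro a b hc hcb
  by_contra hne
  set i := c a with hi
  have hclass := class_card hcard hreg hs i
  have hab : univ.filter (fun v => c v = i) = {a, b} := by
    refine (Finset.eq_of_subset_of_card_le ?_ ?_).symm
    · intro z hz
      simp only [Finset.mem_insert, Finset.mem_singleton] at hz
      rcases hz with h | h <;> subst h <;>
        simp [Finset.mem_filter, hi, hc.symm]
    · rw [hclass, Finset.card_pair hne]
  have hmem : ∀ w : V, c w = i → w = a ∨ w = b := by
    intro w hw
    have : w ∈ ({a, b} : Finset V) := hab ▸ Finset.mem_filter.2 ⟨Finset.mem_univ _, hw⟩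
    simpa using this
  -- cover
  have hcov : ∀ v : V, (v = a ∨ G.Adj a v) ∨ (v = b ∨ G.Adj b v) := by
    intro v
    obtain ⟨w, ⟨hw1, hw2⟩, -⟩ := hs v i
    rcases hmem w hw2 with h | h <;> subst h
    · left
      rcases hw1 with h' | h'
      · exact Or.inl h'.symm
      · exact Or.inr h'.symm
    · right
      rcases hw1 with h' | h'
      · exact Or.inl h'.symm
      · exact Or.inr h'.symm
  -- disjointness
  have hdisj : ∀ v : V, ¬((v = a ∨ G.Adj a v) ∧ (v = b ∨ G.Adj b v)) := by
    rintro v ⟨h1, h2⟩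
    obtain ⟨w, -, huniq⟩ := hs v i
    have ha : a = w := huniq a ⟨by rcases h1 with h | h; exacts [Or.inl h.symm, Or.inr h.symm], rfl⟩
    have hb : b = w := huniq b ⟨by rcases h2 with h | h; exacts [Or.inl h.symm, Or.inr h.symm],
      hc.symm⟩
    exact hne (ha.trans hb.symm)
  -- a has a neighbor
  obtain ⟨y, hy⟩ : ∃ y, G.Adj a y := by
    rw [← SimpleGraph.degree_pos_iff_exists_adj, hreg a]; omega
  have hcby : cb y ≠ cb a := Ne.symm (hproper a y hy)
  have houtside : ∀ v, v ≠ a → v ≠ b → cb v ≠ cb a := by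
    intro v hva hvb
    rcases hcov v with (h | h) | (h | h)
    · exact absurd h hva
    · exact Ne.symm (hproper a v h)
    · exact absurd h hvb
    · rw [hcb]; exact Ne.symm (hproper b v h)
  have hnb : ∀ z, G.Adj y z → z = a := by
    intro z hz
    have h2 : cb z = cb a := fin2_eq _ _ _ (Ne.symm (hproper y z hz)) (Ne.symm hcby)
    by_contra hza
    have hzb : z ≠ b := by
      intro h
      subst h
      exact hdisj y ⟨Or.inr hy, Or.inr hz.symm⟩
    exact houtside z hza hzb h2
  have hsub : G.neighborFinset y ⊆ {a} := by
    intro z hz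
    simp only [SimpleGraph.mem_neighborFinset] at hz
    simp [hnb z hz]
  have := Finset.card_le_card hsub
  rw [SimpleGraph.card_neighborFinset_eq_degree, hreg y, Finset.card_singleton] at this
  omega

lemma coloring_of_one {V : Type*} [Fintype V] [DecidableEq V]
    {G : SimpleGraph V} [DecidableRel G.Adj]
    (hcard : Fintype.card V = 2 * 1 + 2)
    (hreg : G.IsRegularOfDegree 1)
    {c : V → Fin (1 + 1)} (hs : IsTotallySilver G c) :
    ∃ cb : V → Fin 2, (∀ u v, G.Adj u v → cb u ≠ cb v) ∧
      (∀ u v, c u = c v → cb u = cb v → u = v) := by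
  classical
  -- unique neighbor facts
  have huniqnb : ∀ v x y : V, G.Adj v x → G.Adj v y → x = y := by
    intro v x y hx hy
    have h1 : x ∈ G.neighborFinset v := by simpa using hx
    have h2 : y ∈ G.neighborFinset v := by simpa using hy
    have hc1 : (G.neighborFinset v).card = 1 := by
      rw [SimpleGraph.card_neighborFinset_eq_degree, hreg v]
    obtain ⟨z, hz⟩ := Finset.card_eq_one.1 hc1
    rw [hz, Finset.mem_singleton] at h1 h2
    rw [h1, h2]
  -- class 0
  obtain ⟨a, b, hne, hab⟩ := Finset.card_eq_two.1 (class_card hcard hreg hs 0)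
  have hca : c a = 0 := by
    have : a ∈ univ.filter (fun v => c v = (0 : Fin 2)) := by rw [hab]; simp
    simpa using this
  have hcb0 : c b = 0 := by
    have : b ∈ univ.filter (fun v => c v = (0 : Fin 2)) := by rw [hab]; simp
    simpa using this
  have hclass0 : ∀ w : V, c w = 0 → w = a ∨ w = b := by
    intro w hw
    have : w ∈ ({a, b} : Finset V) := hab ▸ Finset.mem_filter.2 ⟨Finset.mem_univ _, hw⟩
    simpa using this
  -- neighbors
  obtain ⟨na, hna⟩ : ∃ y, G.Adj a y := by
    rw [← SimpleGraph.degree_pos_iff_exists_adj, hreg a]; omega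
  obtain ⟨nb, hnb⟩ : ∃ y, G.Adj b y := by
    rw [← SimpleGraph.degree_pos_iff_exists_adj, hreg b]; omega
  have hcna : c na = 1 := by
    obtain ⟨w, ⟨hw1, hw2⟩, -⟩ := hs a 1
    have hwa : w ≠ a := by intro h; rw [h, hca] at hw2; exact absurd hw2 (by decide)
    have : w = na := huniqnb a w na (hw1.resolve_left hwa) hna
    rw [← this, hw2]
  have hcnb : c nb = 1 := by
    obtain ⟨w, ⟨hw1, hw2⟩, -⟩ := hs b 1
    have hwb : w ≠ b := by intro h; rw [h, hcb0] at hw2; exact absurd hw2 (by decide)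
    have : w = nb := huniqnb b w nb (hw1.resolve_left hwb) hnb
    rw [← this, hw2]
  have hnanb : na ≠ nb := by
    intro h
    exact hne (huniqnb na a b (G.symm.symm _ _ hna) (h ▸ G.symm.symm _ _ hnb))
  have hnaa : na ≠ a := fun h => G.loopless.irrefl a (h ▸ hna)
  have hnab : na ≠ b := fun h => by
    rw [h] at hcna; rw [hcna] at hcb0; exact absurd hcb0 (by decide)
  have hnba : nb ≠ a := fun h => by
    rw [h] at hcnb; rw [hcnb] at hca; exact absurd hca (by decide)
  have hnbb : nb ≠ b := fun h => G.loopless.irrefl b (h ▸ hnb)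
  have hclass1 : ∀ w : V, c w = 1 → w = na ∨ w = nb := by
    intro w hw
    have h2 : (univ.filter (fun v => c v = (1 : Fin 2))).card = 2 := class_card hcard hreg hs 1
    have hsub : ({na, nb} : Finset V) ⊆ univ.filter (fun v => c v = (1 : Fin 2)) := by
      intro z hz
      simp only [Finset.mem_insert, Finset.mem_singleton] at hz
      rcases hz with h | h <;> subst h <;> simp [hcna, hcnb]
    have heq : ({na, nb} : Finset V) = univ.filter (fun v => c v = (1 : Fin 2)) :=
      Finset.eq_of_subset_of_card_le hsub (by rw [h2, Finset.card_pair hnanb])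
    have : w ∈ ({na, nb} : Finset V) := heq ▸ Finset.mem_filter.2 ⟨Finset.mem_univ _, hw⟩
    simpa using this
  have hall : ∀ w : V, w = a ∨ w = b ∨ w = na ∨ w = nb := by
    intro w
    have : c w = 0 ∨ c w = 1 := (by decide : ∀ x : Fin (1+1), x = 0 ∨ x = 1) (c w)
    rcases this with h | h
    · rcases hclass0 w h with h' | h' <;> tauto
    · rcases hclass1 w h with h' | h' <;> tauto
  -- edge classification
  have hedge_a : ∀ z, G.Adj a z → z = na := fun z hz => huniqnb a z na hz hna
  have hedge_b : ∀ z, G.Adj b z → z = nb := fun z hz => huniqnb b z nb hz hnb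
  have hedge_na : ∀ z, G.Adj na z → z = a := fun z hz => huniqnb na z a hz (G.symm.symm _ _ hna)
  have hedge_nb : ∀ z, G.Adj nb z → z = b := fun z hz => huniqnb nb z b hz (G.symm.symm _ _ hnb)
  set cbf : V → Fin 2 := fun v => if v = a ∨ v = nb then 0 else 1 with hcbf
  have vba : cbf a = 0 := if_pos (Or.inl rfl)
  have vbnb : cbf nb = 0 := if_pos (Or.inr rfl)
  have vbb : cbf b = 1 := if_neg (by rintro (h | h); exacts [hne h.symm, hnbb h.symm])
  have vbna : cbf na = 1 := if_neg (by rintro (h | h); exacts [hnaa h, hnanb h])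
  refine ⟨cbf, ?_, ?_⟩
  · intro u v huv
    rcases hall u with h | h | h | h <;> subst h
    · rw [hedge_a v huv, vba, vbna]; decide
    · rw [hedge_b v huv, vbb, vbnb]; decide
    · rw [hedge_na v huv, vbna, vba]; decide
    · rw [hedge_nb v huv, vbnb, vbb]; decide
  · intro u v hcu hcbu
    rcases hall u with h | h | h | h <;> rcases hall v with h' | h' | h' | h' <;>
      subst h <;> subst h' <;>
      simp only [vba, vbb, vbna, vbnb] at hcbu <;>
      simp only [hca, hcb0, hcna, hcnb] at hcu <;>
      first
        | rfl
        | exact absurd hcbu (by decide)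
        | exact absurd hcu (by decide)

theorem stmt_6 (r : ℕ) (hr : 1 ≤ r) {V : Type*} [Fintype V]
    (G : SimpleGraph V) [DecidableRel G.Adj]
    (hcard : Fintype.card V = 2 * r + 2)
    (hreg : G.IsRegularOfDegree r)
    (hbip : G.Colorable 2)
    (hsilver : ∃ c : V → Fin (r + 1), IsTotallySilver G c) :
    Nonempty (G ≃g B r) := by
  classical
  obtain ⟨c, hs⟩ := hsilver
  obtain ⟨C⟩ := hbip
  have hproper : ∀ u v, G.Adj u v → C u ≠ C v := fun u v h => C.valid h
  by_cases h2 : 2 ≤ r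
  · exact build_iso hcard hs hproper (split_of_two_le h2 hcard hreg hs hproper)
  · have hr1 : r = 1 := by omega
    subst hr1
    obtain ⟨cb, hp, hsp⟩ := coloring_of_one hcard hreg hs
    exact build_iso hcard hs hp hsp
end

section
/- A graph G is r-regular and totally silver if and only if V(G) can be partitioned into r+1 independent sets C_0, C_1, ..., C_r such that for all distinct i, j, the subgraph induced by G on C_i ∪ C_j is 1-regular (a perfect matching between C_i and C_j). -/
theorem stmt_7 {V : Type*} [Fintype V] (G : SimpleGraph V) [DecidableRel G.Adj] (r : ℕ) :
    (G.IsRegularOfDegree r ∧ ∃ c : V → Fin (r + 1), IsTotallySilver G c) ↔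
    ∃ C : Fin (r + 1) → Set V,
      (∀ v, ∃! i, v ∈ C i) ∧
      (∀ i, ∀ u ∈ C i, ∀ v ∈ C i, ¬ G.Adj u v) ∧
      (∀ i j, i ≠ j → ∀ u ∈ C i ∪ C j, ∃! w, w ∈ C i ∪ C j ∧ G.Adj u w) := by
  classical
  constructor
  · rintro ⟨hreg, c, hc⟩
    -- independence: a vertex has no neighbor of its own color
    have hind : ∀ u v, G.Adj u v → c u ≠ c v := by
      intro u v hadj hcu
      obtain ⟨w, _, huniq⟩ := hc u (c u)
      have h1 : u = w := huniq u ⟨Or.inl rfl, rfl⟩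
      have h2 : v = w := huniq v ⟨Or.inr hadj, hcu.symm⟩
      exact G.ne_of_adj hadj (h1.trans h2.symm)
    have key : ∀ a b : Fin (r + 1), a ≠ b → ∀ u, c u = a →
        ∃! w, (c w = a ∨ c w = b) ∧ G.Adj u w := by
      intro a b hab u hu
      obtain ⟨w, ⟨hw1, hw2⟩, huniq⟩ := hc u b
      have hwne : w ≠ u := by
        rintro rfl; exact hab (hu ▸ hw2 ▸ rfl)
      have hadj : G.Adj u w := by
        rcases hw1 with h | h
        · exact absurd h hwne
        · exact h
      refine ⟨w, ⟨Or.inr hw2, hadj⟩, ?_⟩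
      rintro y ⟨hy1 | hy1, hy2⟩
      · exact absurd (hu.trans hy1.symm) (hind u y hy2)
      · exact huniq y ⟨Or.inr hy2, hy1⟩
    refine ⟨fun i => c ⁻¹' {i}, ?_, ?_, ?_⟩
    · intro v
      exact ⟨c v, rfl, fun i hi => Eq.symm hi⟩
    · intro i u hu v hv hadj
      exact hind u v hadj (hu.trans hv.symm)
    · intro i j hij u hu
      rcases hu with hu | hu
      · obtain ⟨w, ⟨hw1, hw2⟩, huniq⟩ := key i j hij u hu
        exact ⟨w, ⟨hw1, hw2⟩, fun y hy => huniq y hy⟩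
      · obtain ⟨w, ⟨hw1, hw2⟩, huniq⟩ := key j i hij.symm u hu
        exact ⟨w, ⟨hw1.symm, hw2⟩, fun y hy => huniq y ⟨hy.1.symm, hy.2⟩⟩
  · rintro ⟨C, hpart, hind, hmatch⟩
    set c : V → Fin (r + 1) := fun v => (hpart v).choose with hcdef
    have hc : ∀ v, v ∈ C (c v) := fun v => (hpart v).choose_spec.1
    have hcu : ∀ v i, v ∈ C i → c v = i := fun v i h =>
      ((hpart v).choose_spec.2 i h).symm
    have hsilver : IsTotallySilver G c := by
      intro v i
      by_cases h : c v = i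
      · refine ⟨v, ⟨Or.inl rfl, h⟩, ?_⟩
        rintro y ⟨hy1 | hy1, hy2⟩
        · exact hy1
        · exfalso
          have hyC : y ∈ C i := hy2 ▸ hc y
          have hvC : v ∈ C i := h ▸ hc v
          exact hind i v hvC y hyC hy1
      · have hmem : v ∈ C (c v) ∪ C i := Or.inl (hc v)
        obtain ⟨w, ⟨hw1, hw2⟩, huniq⟩ := hmatch (c v) i h v hmem
        have hwCi : w ∈ C i := by
          rcases hw1 with hw | hw
          · exact absurd hw2 (hind (c v) v (hc v) w hw)
          · exact hw
        refine ⟨w, ⟨Or.inr hw2, hcu w i hwCi⟩, ?_⟩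
        rintro y ⟨hy1 | hy1, hy2⟩
        · exact absurd (hy1 ▸ hy2) h
        · have : y ∈ C (c v) ∪ C i := Or.inr (hy2 ▸ hc y)
          exact huniq y ⟨this, hy1⟩
    refine ⟨?_, c, hsilver⟩
    intro v
    have hcard : (insert v (G.neighborFinset v)).card = (Finset.univ : Finset (Fin (r + 1))).card := by
      refine Finset.card_bij (fun w _ => c w) (fun a _ => Finset.mem_univ _) ?_ ?_
      · intro a ha b hb hab
        obtain ⟨w, _, huniq⟩ := hsilver v (c a)
        have hmem : ∀ x, x ∈ insert v (G.neighborFinset v) → (x = v ∨ G.Adj v x) := by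
          intro x hx
          rcases Finset.mem_insert.mp hx with h | h
          · exact Or.inl h
          · exact Or.inr (G.mem_neighborFinset v x |>.mp h)
        have h1 := huniq a ⟨hmem a ha, rfl⟩
        have h2 := huniq b ⟨hmem b hb, hab.symm⟩
        exact h1.trans h2.symm
      · intro b _
        obtain ⟨w, ⟨hw1, hw2⟩, _⟩ := hsilver v b
        refine ⟨w, ?_, hw2⟩
        rcases hw1 with h | h
        · exact Finset.mem_insert.mpr (Or.inl h)
        · exact Finset.mem_insert.mpr (Or.inr ((G.mem_neighborFinset v w).mpr h))
    rw [Finset.card_insert_of_notMem (by simp), Finset.card_univ, Fintype.card_fin] at hcard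
    exact Nat.succ_injective hcard
end

section
/- Let G be an r-regular totally silver graph with totally silver color classes C_0,...,C_r, and let C_{r+1} be a new set of vertices disjoint from V(G) with |C_{r+1}| = |C_0|. Then the graph H obtained from G by adding the vertices of C_{r+1} and adding a perfect matching between C_{r+1} and each C_i (i = 0,...,r) is (r+1)-regular and totally silver. -/
theorem stmt_8 {V W : Type*} (G : SimpleGraph V) (r : ℕ)
    (hreg : ∀ v, (G.neighborSet v).ncard = r)
    (c : V → Fin (r + 1)) (hc : IsTotallySilver G c)
    (e : (i : Fin (r + 1)) → W ≃ {v : V // c v = i}) :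
    let H : SimpleGraph (V ⊕ W) := SimpleGraph.fromRel (fun a b =>
      (∃ u v : V, a = Sum.inl u ∧ b = Sum.inl v ∧ G.Adj u v) ∨
      (∃ (i : Fin (r + 1)) (w : W), a = Sum.inl ((e i w : {v : V // c v = i}) : V) ∧ b = Sum.inr w))
    (∀ x, (H.neighborSet x).ncard = r + 1) ∧
    ∃ c' : V ⊕ W → Fin (r + 2), IsTotallySilver H c' := by
  intro H
  have hkey : ∀ (i : Fin (r+1)) (w : W), c ((e i w : {v : V // c v = i}) : V) = i :=
    fun i w => (e i w).2
  have hAdjVV : ∀ u v : V, H.Adj (.inl u) (.inl v) ↔ G.Adj u v := by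
    intro u v
    simp only [H, SimpleGraph.fromRel_adj, ne_eq, Sum.inl.injEq]
    constructor
    · rintro ⟨hne, (⟨a, b, ha, hb, hab⟩ | ⟨i, w, h1, h2⟩) | (⟨a, b, ha, hb, hab⟩ | ⟨i, w, h1, h2⟩)⟩
      · cases ha; cases hb; exact hab
      · exact absurd h2 (by simp)
      · cases ha; cases hb; exact hab.symm
      · exact absurd h2 (by simp)
    · intro h
      exact ⟨fun hh => G.irrefl (hh ▸ h), Or.inl (Or.inl ⟨u, v, rfl, rfl, h⟩)⟩
  have hAdjVW : ∀ (v : V) (w : W), H.Adj (.inl v) (.inr w) ↔ ∃ i, ((e i w : {x : V // c x = i}) : V) = v := by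
    intro v w
    simp only [H, SimpleGraph.fromRel_adj, ne_eq]
    constructor
    · rintro ⟨hne, (⟨a, b, ha, hb, hab⟩ | ⟨i, w', h1, h2⟩) | (⟨a, b, ha, hb, hab⟩ | ⟨i, w', h1, h2⟩)⟩
      · exact absurd hb (by simp)
      · cases h2; exact ⟨i, (Sum.inl.inj h1).symm⟩
      · exact absurd ha (by simp)
      · exact absurd h1 (by simp)
    · rintro ⟨i, hi⟩
      exact ⟨by simp, Or.inl (Or.inr ⟨i, w, by rw [hi], rfl⟩)⟩
  have hAdjWW : ∀ w w' : W, ¬ H.Adj (.inr w) (.inr w') := by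
    intro w w'
    simp only [H, SimpleGraph.fromRel_adj, ne_eq]
    rintro ⟨hne, (⟨a, b, ha, hb, hab⟩ | ⟨i, w'', h1, h2⟩) | (⟨a, b, ha, hb, hab⟩ | ⟨i, w'', h1, h2⟩)⟩
    · exact absurd ha (by simp)
    · exact absurd h1 (by simp)
    · exact absurd hb (by simp)
    · exact absurd h1 (by simp)
  -- unique W-neighbor of each v
  have hw0 : ∀ v : V, ((e (c v) ((e (c v)).symm ⟨v, rfl⟩) : {x : V // c x = c v}) : V) = v := by
    intro v; simp
  have hwu : ∀ (v : V) (i : Fin (r+1)) (w : W),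
      ((e i w : {x : V // c x = i}) : V) = v → w = (e (c v)).symm ⟨v, rfl⟩ := by
    intro v i w h
    have hi : i = c v := by rw [← hkey i w, h]
    subst hi
    rw [Equiv.eq_symm_apply]
    exact Subtype.ext h
  -- finiteness of neighbor sets of G
  have hNfin : ∀ v : V, (G.neighborSet v).Finite := by
    intro v
    have hinj : Set.InjOn c {w | w = v ∨ G.Adj v w} := by
      intro a ha b hb hab
      obtain ⟨u, _, huniq⟩ := hc v (c a)
      exact (huniq a ⟨ha, rfl⟩).trans (huniq b ⟨hb, hab.symm⟩).symm
    have hfin : ({w | w = v ∨ G.Adj v w}).Finite :=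
      Set.Finite.of_finite_image (Set.toFinite _) hinj
    exact hfin.subset fun u hu => Or.inr hu
  -- neighbor set descriptions
  have hsetV : ∀ v : V, H.neighborSet (.inl v)
      = Sum.inl '' G.neighborSet v ∪ {Sum.inr ((e (c v)).symm ⟨v, rfl⟩)} := by
    intro v
    ext x
    cases x with
    | inl u =>
        simp only [SimpleGraph.mem_neighborSet, hAdjVV, Set.mem_union, Set.mem_image,
          Set.mem_singleton_iff, Sum.inl.injEq, reduceCtorEq, or_false]
        constructor
        · exact fun h => ⟨u, h, rfl⟩
        · rintro ⟨a, ha, rfl⟩; exact ha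
    | inr w =>
        simp only [SimpleGraph.mem_neighborSet, hAdjVW, Set.mem_union, Set.mem_image,
          Set.mem_singleton_iff, Sum.inr.injEq, reduceCtorEq, false_and, and_false, exists_false, false_or]
        constructor
        · rintro ⟨i, hi⟩; exact hwu v i w hi
        · rintro rfl; exact ⟨c v, hw0 v⟩
  have hsetW : ∀ w : W, H.neighborSet (.inr w)
      = Set.range (fun i : Fin (r+1) => (Sum.inl ((e i w : {x : V // c x = i}) : V) : V ⊕ W)) := by
    intro w
    ext x
    cases x with
    | inl v =>
        simp only [SimpleGraph.mem_neighborSet, Set.mem_range]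
        rw [H.adj_comm, hAdjVW]
        constructor
        · rintro ⟨i, hi⟩; exact ⟨i, by rw [hi]⟩
        · rintro ⟨i, hi⟩; exact ⟨i, Sum.inl.inj hi⟩
    | inr w' =>
        simp only [SimpleGraph.mem_neighborSet, Set.mem_range, reduceCtorEq, exists_false,
          iff_false]
        exact hAdjWW w w'
  constructor
  · rintro (v | w)
    · rw [hsetV v, Set.ncard_union_eq (by simp [Set.disjoint_singleton_right])
          ((hNfin v).image _) (Set.finite_singleton _), Set.ncard_singleton,
        Set.ncard_image_of_injective _ Sum.inl_injective, hreg v]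
    · rw [hsetW w]
      have hinj : Function.Injective
          (fun i : Fin (r+1) => (Sum.inl ((e i w : {x : V // c x = i}) : V) : V ⊕ W)) := by
        intro i j hij
        have := Sum.inl.inj hij
        rw [← hkey i w, ← hkey j w, this]
      rw [← Set.image_univ, Set.ncard_image_of_injective _ hinj, Set.ncard_univ,
        Nat.card_eq_fintype_card, Fintype.card_fin]
  · refine ⟨Sum.elim (fun v => (c v).castSucc) (fun _ => Fin.last (r+1)), ?_⟩
    have hne : ∀ j : Fin (r+1), j.castSucc ≠ Fin.last (r+1) := fun j => (Fin.castSucc_lt_last j).ne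
    rintro (v | w) i
    · rcases Fin.eq_castSucc_or_eq_last i with ⟨j, rfl⟩ | rfl
      · obtain ⟨u, ⟨hu1, hu2⟩, huniq⟩ := hc v j
        refine ⟨Sum.inl u, ⟨?_, by simp [hu2]⟩, ?_⟩
        · rcases hu1 with rfl | h
          · exact Or.inl rfl
          · exact Or.inr ((hAdjVV v u).mpr h)
        · rintro (u' | w') ⟨h1, h2⟩
          · simp only [Sum.elim_inl, Fin.castSucc_inj] at h2
            have : u' = v ∨ G.Adj v u' := by
              rcases h1 with h1 | h1
              · exact Or.inl (Sum.inl.inj h1)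
              · exact Or.inr ((hAdjVV v u').mp h1)
            rw [huniq u' ⟨this, h2⟩]
          · simp only [Sum.elim_inr] at h2
            exact absurd h2.symm (hne j)
      · refine ⟨Sum.inr ((e (c v)).symm ⟨v, rfl⟩), ⟨Or.inr ?_, rfl⟩, ?_⟩
        · exact (hAdjVW v _).mpr ⟨c v, hw0 v⟩
        · rintro (u' | w') ⟨h1, h2⟩
          · simp only [Sum.elim_inl] at h2
            exact absurd h2 (hne _)
          · rcases h1 with h1 | h1
            · exact absurd h1 (by simp)
            · obtain ⟨i, hi⟩ := (hAdjVW v w').mp h1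
              rw [hwu v i w' hi]
    · rcases Fin.eq_castSucc_or_eq_last i with ⟨j, rfl⟩ | rfl
      · refine ⟨Sum.inl ((e j w : {x : V // c x = j}) : V),
          ⟨Or.inr ?_, by simp [hkey]⟩, ?_⟩
        · rw [H.adj_comm]; exact (hAdjVW _ w).mpr ⟨j, rfl⟩
        · rintro (v' | w') ⟨h1, h2⟩
          · simp only [Sum.elim_inl, Fin.castSucc_inj] at h2
            rcases h1 with h1 | h1
            · exact absurd h1 (by simp)
            · rw [H.adj_comm] at h1
              obtain ⟨i, hi⟩ := (hAdjVW v' w).mp h1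
              have : i = j := by rw [← hkey i w, hi, h2]
              subst this
              rw [hi]
          · simp only [Sum.elim_inr] at h2
            exact absurd h2.symm (hne j)
      · refine ⟨Sum.inr w, ⟨Or.inl rfl, rfl⟩, ?_⟩
        rintro (v' | w') ⟨h1, h2⟩
        · simp only [Sum.elim_inl] at h2
          exact absurd h2 (hne _)
        · rcases h1 with h1 | h1
          · exact h1
          · exact absurd h1 (hAdjWW w w')
end

section
/- If c is a totally silver coloring of a graph G with edges u_1v_1 and u_2v_2 satisfying c(u_1) = c(u_2), c(v_1) = c(v_2), u_1v_2 ∉ E(G) and u_2v_1 ∉ E(G), then the graph G' obtained by deleting u_1v_1 and u_2v_2 and adding u_1v_2 and u_2v_1 also has c as a totally silver coloring. -/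
set_option maxHeartbeats 2000000
lemma transfer_silver {V : Type*} {k : ℕ} {G G' : SimpleGraph V} {c : V → Fin k}
    (hc : IsTotallySilver G c)
    (h : ∀ v : V, ∃ τ : Equiv.Perm V, (∀ w, c (τ w) = c w) ∧
      ∀ w, ((w = v ∨ G'.Adj v w) ↔ (τ w = v ∨ G.Adj v (τ w)))) :
    IsTotallySilver G' c := by
  intro v i
  obtain ⟨τ, hτc, hτm⟩ := h v
  obtain ⟨w₀, ⟨hw₀m, hw₀c⟩, huniq⟩ := hc v i
  refine ⟨τ.symm w₀, ⟨?_, ?_⟩, ?_⟩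
  · rw [hτm]; simpa using hw₀m
  · have := hτc (τ.symm w₀)
    simp only [Equiv.apply_symm_apply] at this
    rw [← this, hw₀c]
  · rintro w ⟨hm, hcw⟩
    have hmem := (hτm w).mp hm
    have h2 := huniq (τ w) ⟨hmem, by rw [hτc]; exact hcw⟩
    rw [← h2]; simp

theorem stmt_9 {V : Type*} (G : SimpleGraph V) {k : ℕ} (c : V → Fin k)
    (hc : IsTotallySilver G c) (u₁ v₁ u₂ v₂ : V)
    (h₁ : G.Adj u₁ v₁) (h₂ : G.Adj u₂ v₂)
    (hu : c u₁ = c u₂) (hv : c v₁ = c v₂)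
    (hn₁ : ¬ G.Adj u₁ v₂) (hn₂ : ¬ G.Adj u₂ v₁) :
    IsTotallySilver
      ((G.deleteEdges {s(u₁, v₁), s(u₂, v₂)}) ⊔
        SimpleGraph.fromRel (fun a b => (a = u₁ ∧ b = v₂) ∨ (a = u₂ ∧ b = v₁))) c := by
  classical
  have ne11 : u₁ ≠ v₁ := h₁.ne
  have ne22 : u₂ ≠ v₂ := h₂.ne
  have neu : u₁ ≠ u₂ := by rintro rfl; exact hn₁ h₂
  have nev : v₁ ≠ v₂ := by rintro rfl; exact hn₁ h₁
  have ne12 : u₁ ≠ v₂ := by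
    rintro rfl
    obtain ⟨w, _, hq⟩ := hc u₁ (c u₁)
    have e1 := hq u₁ ⟨Or.inl rfl, rfl⟩
    have e2 := hq v₁ ⟨Or.inr h₁, hv⟩
    exact ne11 (e1.trans e2.symm)
  have ne21 : u₂ ≠ v₁ := by
    rintro rfl
    obtain ⟨w, _, hq⟩ := hc u₂ (c v₂)
    have e1 := hq u₂ ⟨Or.inl rfl, hv⟩
    have e2 := hq v₂ ⟨Or.inr h₂, rfl⟩
    exact ne22 (e1.trans e2.symm)
  set G' := ((G.deleteEdges {s(u₁, v₁), s(u₂, v₂)}) ⊔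
        SimpleGraph.fromRel (fun a b => (a = u₁ ∧ b = v₂) ∨ (a = u₂ ∧ b = v₁))) with hG'
  have hadj : ∀ a b : V, G'.Adj a b ↔
      ((G.Adj a b ∧ ¬((a = u₁ ∧ b = v₁) ∨ (a = v₁ ∧ b = u₁) ∨ (a = u₂ ∧ b = v₂) ∨ (a = v₂ ∧ b = u₂)))
        ∨ (a ≠ b ∧ ((a = u₁ ∧ b = v₂) ∨ (a = u₂ ∧ b = v₁) ∨ (b = u₁ ∧ a = v₂) ∨ (b = u₂ ∧ a = v₁)))) := by
    intro a b
    simp only [hG', SimpleGraph.sup_adj, SimpleGraph.deleteEdges_adj, SimpleGraph.fromRel_adj,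
      Set.mem_insert_iff, Set.mem_singleton_iff, Sym2.eq_iff]
    tauto
  apply transfer_silver hc
  intro v
  by_cases hv1 : v = u₁ ∨ v = u₂
  · refine ⟨Equiv.swap v₁ v₂, fun w => ?_, fun w => ?_⟩
    · rcases eq_or_ne w v₁ with rfl | h1
      · rw [Equiv.swap_apply_left]; exact hv.symm
      rcases eq_or_ne w v₂ with rfl | h2
      · rw [Equiv.swap_apply_right]; exact hv
      · rw [Equiv.swap_apply_of_ne_of_ne h1 h2]
    · rcases eq_or_ne w v₁ with rfl | h1
      · rw [Equiv.swap_apply_left, hadj]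
        rcases hv1 with rfl | rfl
        · constructor
          · rintro (rfl | h)
            · exact absurd rfl ne11
            · tauto
          · rintro (rfl | h)
            · exact absurd rfl ne12
            · exact absurd h hn₁
        · constructor
          · rintro (rfl | h)
            · exact absurd rfl ne21
            · tauto
          · rintro (rfl | h)
            · exact absurd rfl ne22
            · tauto
      rcases eq_or_ne w v₂ with rfl | h2
      · rw [Equiv.swap_apply_right, hadj]
        rcases hv1 with rfl | rfl
        · constructor
          · rintro (rfl | h)
            · exact absurd rfl ne12
            · tauto
          · rintro (rfl | h) <;> tauto
        · constructor
          · rintro (rfl | h) <;> tauto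
          · rintro (rfl | h) <;> tauto
      · rw [Equiv.swap_apply_of_ne_of_ne h1 h2, hadj]
        rcases hv1 with rfl | rfl
        · constructor
          · rintro (rfl | h)
            · tauto
            · tauto
          · rintro (rfl | h) <;> tauto
        · constructor
          · rintro (rfl | h) <;> tauto
          · rintro (rfl | h) <;> tauto
  · push_neg at hv1
    by_cases hv2 : v = v₁ ∨ v = v₂
    · refine ⟨Equiv.swap u₁ u₂, fun w => ?_, fun w => ?_⟩
      · rcases eq_or_ne w u₁ with rfl | h1
        · rw [Equiv.swap_apply_left]; exact hu.symm
        rcases eq_or_ne w u₂ with rfl | h2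
        · rw [Equiv.swap_apply_right]; exact hu
        · rw [Equiv.swap_apply_of_ne_of_ne h1 h2]
      · rcases eq_or_ne w u₁ with rfl | h1
        · rw [Equiv.swap_apply_left, hadj]
          rcases hv2 with rfl | rfl
          · constructor
            · rintro (rfl | h) <;> [tauto; tauto]
            · rintro (rfl | h)
              · tauto
              · exact absurd h.symm hn₂
          · constructor
            · rintro (rfl | h) <;> tauto
            · rintro (rfl | h) <;> tauto
        rcases eq_or_ne w u₂ with rfl | h2
        · rw [Equiv.swap_apply_right, hadj]
          rcases hv2 with rfl | rfl
          · constructor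
            · rintro (rfl | h) <;> tauto
            · rintro (rfl | h)
              · tauto
              · exact Or.inr (Or.inr ⟨Ne.symm ne21, Or.inr (Or.inr (Or.inr ⟨rfl, rfl⟩))⟩)
          · constructor
            · rintro (rfl | h) <;> tauto
            · rintro (rfl | h)
              · tauto
              · exact absurd h.symm hn₁
        · rw [Equiv.swap_apply_of_ne_of_ne h1 h2, hadj]
          rcases hv2 with rfl | rfl
          · constructor
            · rintro (rfl | h) <;> tauto
            · rintro (rfl | h) <;> tauto
          · constructor
            · rintro (rfl | h) <;> tauto
            · rintro (rfl | h) <;> tauto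
    · push_neg at hv2
      refine ⟨Equiv.refl V, fun w => rfl, fun w => ?_⟩
      simp only [Equiv.refl_apply]
      rw [hadj]
      constructor
      · rintro (rfl | h)
        · tauto
        · rcases h with ⟨hg, _⟩ | ⟨_, h⟩
          · tauto
          · rcases h with ⟨rfl, rfl⟩ | ⟨rfl, rfl⟩ | ⟨rfl, rfl⟩ | ⟨rfl, rfl⟩ <;>
              first
              | exact absurd rfl hv1.1 | exact absurd rfl hv1.2
              | exact absurd rfl hv2.1 | exact absurd rfl hv2.2
      · rintro (rfl | h)
        · tauto
        · refine Or.inr (Or.inl ⟨h, ?_⟩)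
          rintro (⟨rfl, rfl⟩ | ⟨rfl, rfl⟩ | ⟨rfl, rfl⟩ | ⟨rfl, rfl⟩) <;>
            first
            | exact absurd rfl hv1.1 | exact absurd rfl hv1.2
            | exact absurd rfl hv2.1 | exact absurd rfl hv2.2
end

section
/- Let G be a cubic totally silver graph with a totally silver coloring c, and let (S,T) be a partition of V(G) such that exactly two edges xy and x'y' cross between S and T, with x,x' ∈ S, x ≠ x', y ≠ y'. Then c(x') = c(y) and c(y') = c(x). -/
/-- The purely arithmetic core: if the cut-counting identity holds for every color,
then the colors must pair up across the cut. -/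
theorem comb_aux (a b d e : Fin 4) (m : ℕ) (n : Fin 4 → ℕ)
    (key : ∀ i : Fin 4, m + ((if a = i then 1 else 0) + (if b = i then 1 else 0)) =
      4 * n i + ((if d = i then 1 else 0) + (if e = i then 1 else 0)))
    (h1 : a ≠ d) (h2 : b ≠ e) : b = d ∧ e = a := by
  have k0 := key 0
  have k1 := key 1
  have k2 := key 2
  have k3 := key 3
  clear key
  fin_cases a <;> fin_cases b <;> fin_cases d <;> fin_cases e <;>
    simp only [Fin.ext_iff, Fin.val_mk, Fin.val_zero, Fin.val_one, Fin.val_two,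
      show ((3:Fin 4).val = 3) from rfl, Nat.reduceEqDiff, if_true, if_false,
      reduceIte, ne_eq, not_false_eq_true, not_true_eq_false, and_self,
      eq_self_iff_true] at k0 k1 k2 k3 h1 h2 ⊢ <;>
    omega

theorem stmt_11 {V : Type*} [Fintype V] (G : SimpleGraph V) [DecidableRel G.Adj]
    (hreg : G.IsRegularOfDegree 3)
    (c : V → Fin 4) (hc : IsTotallySilver G c)
    (S : Set V) (x x' y y' : V)
    (hxS : x ∈ S) (hx'S : x' ∈ S) (hyT : y ∉ S) (hy'T : y' ∉ S)
    (hxx' : x ≠ x') (hyy' : y ≠ y')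
    (hxy : G.Adj x y) (hx'y' : G.Adj x' y')
    (hcut : ∀ a b, G.Adj a b → a ∈ S → b ∉ S → (a = x ∧ b = y) ∨ (a = x' ∧ b = y')) :
    c x' = c y ∧ c y' = c x := by
  classical
  -- some easy inequalities between the four cut vertices
  have hxy_ne : x ≠ y := fun h => hyT (h ▸ hxS)
  have hxy'_ne : x ≠ y' := fun h => hy'T (h ▸ hxS)
  have hx'y_ne : x' ≠ y := fun h => hyT (h ▸ hx'S)
  have hx'y'_ne : x' ≠ y' := fun h => hy'T (h ▸ hx'S)
  -- adjacent vertices get different colors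
  have hadj_ne : ∀ u v : V, G.Adj u v → c u ≠ c v := by
    intro u v huv h
    obtain ⟨w, -, hu⟩ := hc u (c v)
    have h1 : v = w := hu v ⟨Or.inr huv, rfl⟩
    have h2 : u = w := hu u ⟨Or.inl rfl, h⟩
    rw [h1.trans h2.symm] at huv
    exact G.irrefl huv
  have hcxy : c x ≠ c y := hadj_ne x y hxy
  have hcx'y' : c x' ≠ c y' := hadj_ne x' y' hx'y'
  -- the finset of vertices of S
  set As : Finset V := Finset.univ.filter (· ∈ S) with hAs
  have hmemAs : ∀ v : V, v ∈ As ↔ v ∈ S := by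
    intro v; simp [hAs]
  -- cardinalities of closed neighborhoods intersected with S
  have cardS : ∀ w, w ∈ S → w ≠ x → w ≠ x' →
      (As.filter (fun v => w = v ∨ G.Adj v w)).card = 4 := by
    intro w hwS hwx hwx'
    have hset : As.filter (fun v => w = v ∨ G.Adj v w) = insert w (G.neighborFinset w) := by
      ext v
      simp only [Finset.mem_filter, hmemAs, Finset.mem_insert, SimpleGraph.mem_neighborFinset]
      constructor
      · rintro ⟨hvS, h | h⟩
        · exact Or.inl h.symm
        · exact Or.inr h.symm
      · rintro (rfl | h)
        · exact ⟨hwS, Or.inl rfl⟩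
        · refine ⟨?_, Or.inr h.symm⟩
          by_contra hv
          rcases hcut w v h hwS hv with ⟨hw, -⟩ | ⟨hw, -⟩
          · exact hwx hw
          · exact hwx' hw
    rw [hset, Finset.card_insert_of_notMem (by simp [SimpleGraph.mem_neighborFinset])]
    rw [SimpleGraph.card_neighborFinset_eq_degree, hreg w]
  have cardx : ∀ u v : V, u ∈ S → v ∉ S → G.Adj u v →
      (∀ w, G.Adj u w → w ∉ S → w = v) →
      (As.filter (fun a => u = a ∨ G.Adj a u)).card = 3 := by
    intro u v huS hvT huv hun
    have hset : As.filter (fun a => u = a ∨ G.Adj a u)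
        = insert u ((G.neighborFinset u).erase v) := by
      ext a
      simp only [Finset.mem_filter, hmemAs, Finset.mem_insert, Finset.mem_erase,
        SimpleGraph.mem_neighborFinset]
      constructor
      · rintro ⟨haS, h | h⟩
        · exact Or.inl h.symm
        · exact Or.inr ⟨fun hav => hvT (hav ▸ haS), h.symm⟩
      · rintro (rfl | ⟨hav, h⟩)
        · exact ⟨huS, Or.inl rfl⟩
        · refine ⟨?_, Or.inr h.symm⟩
          by_contra ha
          exact hav (hun a h ha)
    rw [hset, Finset.card_insert_of_notMem (by simp [SimpleGraph.mem_neighborFinset]),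
      Finset.card_erase_of_mem (by simp [SimpleGraph.mem_neighborFinset, huv]),
      SimpleGraph.card_neighborFinset_eq_degree, hreg u]
  have cardy : ∀ u v : V, u ∈ S → v ∉ S → G.Adj u v →
      (∀ w, G.Adj w v → w ∈ S → w = u) →
      (As.filter (fun a => v = a ∨ G.Adj a v)).card = 1 := by
    intro u v huS hvT huv hun
    have hset : As.filter (fun a => v = a ∨ G.Adj a v) = {u} := by
      ext a
      simp only [Finset.mem_filter, hmemAs, Finset.mem_singleton]
      constructor
      · rintro ⟨haS, h | h⟩
        · exact absurd (h ▸ haS) hvT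
        · exact hun a h haS
      · rintro rfl
        exact ⟨huS, Or.inr huv⟩
    rw [hset, Finset.card_singleton]
  have cardT : ∀ w, w ∉ S → w ≠ y → w ≠ y' →
      (As.filter (fun v => w = v ∨ G.Adj v w)).card = 0 := by
    intro w hwT hwy hwy'
    rw [Finset.card_eq_zero]
    ext v
    simp only [Finset.mem_filter, hmemAs, Finset.notMem_empty, iff_false, not_and, not_or]
    intro hvS
    constructor
    · rintro rfl; exact hwT hvS
    · intro h
      rcases hcut v w h hvS hwT with ⟨-, hw⟩ | ⟨-, hw⟩
      · exact hwy hw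
      · exact hwy' hw
  -- instantiate the two "interior" crossing computations
  have cardxx : (As.filter (fun a => x = a ∨ G.Adj a x)).card = 3 := by
    refine cardx x y hxS hyT hxy ?_
    intro w hw hwT
    rcases hcut x w hw hxS hwT with ⟨-, h⟩ | ⟨h, -⟩
    · exact h
    · exact absurd h hxx'
  have cardxx' : (As.filter (fun a => x' = a ∨ G.Adj a x')).card = 3 := by
    refine cardx x' y' hx'S hy'T hx'y' ?_
    intro w hw hwT
    rcases hcut x' w hw hx'S hwT with ⟨h, -⟩ | ⟨-, h⟩
    · exact absurd h.symm hxx'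
    · exact h
  have cardyy : (As.filter (fun a => y = a ∨ G.Adj a y)).card = 1 := by
    refine cardy x y hxS hyT hxy ?_
    intro w hw hwS
    rcases hcut w y hw hwS hyT with ⟨h, -⟩ | ⟨-, h⟩
    · exact h
    · exact absurd h hyy'
  have cardyy' : (As.filter (fun a => y' = a ∨ G.Adj a y')).card = 1 := by
    refine cardy x' y' hx'S hy'T hx'y' ?_
    intro w hw hwS
    rcases hcut w y' hw hwS hy'T with ⟨-, h⟩ | ⟨h, -⟩
    · exact absurd h hyy'.symm
    · exact h
  -- the key counting identity, for each color i
  have key : ∀ i : Fin 4,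
      As.card + ((if c x = i then 1 else 0) + (if c x' = i then 1 else 0)) =
      4 * (As.filter (fun v => c v = i)).card +
        ((if c y = i then 1 else 0) + (if c y' = i then 1 else 0)) := by
    intro i
    -- Step A: double counting.  |S| = ∑_w [c w = i] · |N[w] ∩ S|
    have stepA : As.card = ∑ w : V,
        (if c w = i then (As.filter (fun v => w = v ∨ G.Adj v w)).card else 0) := by
      have huniq_card : ∀ v : V,
          (Finset.univ.filter (fun w => (w = v ∨ G.Adj v w) ∧ c w = i)).card = 1 := by
        intro v
        obtain ⟨w, hw, hu⟩ := hc v i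
        rw [Finset.card_eq_one]
        refine ⟨w, ?_⟩
        ext u
        simp only [Finset.mem_filter, Finset.mem_univ, true_and, Finset.mem_singleton]
        exact ⟨fun h => hu u h, fun h => h ▸ hw⟩
      calc As.card = ∑ _v ∈ As, 1 := Finset.card_eq_sum_ones As
        _ = ∑ v ∈ As, (Finset.univ.filter (fun w => (w = v ∨ G.Adj v w) ∧ c w = i)).card :=
            Finset.sum_congr rfl fun v _ => (huniq_card v).symm
        _ = ∑ v ∈ As, ∑ w : V, (if (w = v ∨ G.Adj v w) ∧ c w = i then 1 else 0) := by
            refine Finset.sum_congr rfl fun v _ => ?_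
            rw [Finset.card_filter]
        _ = ∑ w : V, ∑ v ∈ As, (if (w = v ∨ G.Adj v w) ∧ c w = i then 1 else 0) :=
            Finset.sum_comm
        _ = ∑ w : V, (if c w = i then (As.filter (fun v => w = v ∨ G.Adj v w)).card else 0) := by
            refine Finset.sum_congr rfl fun w _ => ?_
            by_cases h : c w = i
            · rw [if_pos h, Finset.card_filter]
              exact Finset.sum_congr rfl fun v _ => by simp [h]
            · rw [if_neg h]
              exact Finset.sum_eq_zero fun v _ => by simp [h]
    -- Step B: pointwise evaluation of the inner counts
    have point : ∀ w : V,
        (if c w = i then (As.filter (fun v => w = v ∨ G.Adj v w)).card else 0)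
          + ((if w = x then (if c x = i then 1 else 0) else 0)
            + (if w = x' then (if c x' = i then 1 else 0) else 0))
        = (if c w = i ∧ w ∈ S then 4 else 0)
          + ((if w = y then (if c y = i then 1 else 0) else 0)
            + (if w = y' then (if c y' = i then 1 else 0) else 0)) := by
      intro w
      by_cases hwx : w = x
      · subst hwx
        rw [cardxx]
        by_cases h : c w = i <;>
          simp [h, hxx', hxy_ne, hxy'_ne, hxS]
      · by_cases hwx' : w = x'
        · subst hwx'
          rw [cardxx']
          by_cases h : c w = i <;>
            simp [h, Ne.symm hxx', hx'y_ne, hx'y'_ne, hx'S, hwx]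
        · by_cases hwy : w = y
          · subst hwy
            rw [cardyy]
            by_cases h : c w = i <;>
              simp [h, hwx, hwx', hyy', hyT]
          · by_cases hwy' : w = y'
            · subst hwy'
              rw [cardyy']
              by_cases h : c w = i <;>
                simp [h, hwx, hwx', Ne.symm hyy', hy'T]
            · by_cases hwS : w ∈ S
              · rw [cardS w hwS hwx hwx']
                by_cases h : c w = i <;>
                  simp [h, hwx, hwx', hwy, hwy', hwS]
              · rw [cardT w hwS hwy hwy']
                by_cases h : c w = i <;>
                  simp [h, hwx, hwx', hwy, hwy', hwS]
    -- sum the pointwise identity over all vertices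
    have hsum := Finset.sum_congr rfl fun w (_ : w ∈ (Finset.univ : Finset V)) => point w
    simp only [Finset.sum_add_distrib] at hsum
    rw [← stepA] at hsum
    have h4 : ∑ w : V, (if c w = i ∧ w ∈ S then 4 else 0)
        = 4 * (As.filter (fun v => c v = i)).card := by
      rw [Finset.card_filter, hAs, Finset.sum_filter, Finset.mul_sum]
      refine Finset.sum_congr rfl fun w _ => ?_
      by_cases h1 : c w = i <;> by_cases h2 : w ∈ S <;> simp [h1, h2]
    rw [h4] at hsum
    simpa using hsum
  exact comb_aux (c x) (c x') (c y) (c y') As.card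
    (fun i => (As.filter (fun v => c v = i)).card) key hcxy hcx'y'
end

section
/- Let G be a triangle-free cubic totally silver graph containing a 4-cycle x_1x_2x_3x_4x_1, with |V(G)| > 4. Then each x_i has a unique neighbor y_i outside the cycle, the y_i are pairwise distinct, and in any totally silver coloring c one has c(y_1) = c(x_3), c(y_2) = c(x_4), c(y_3) = c(x_1), c(y_4) = c(x_2). -/
theorem stmt_12 {V : Type*} [Fintype V] (G : SimpleGraph V) [DecidableRel G.Adj]
    (hreg : G.IsRegularOfDegree 3)
    (hsilver : ∃ c : V → Fin 4, IsTotallySilver G c)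
    (htf : ¬ ∃ a b d : V, G.Adj a b ∧ G.Adj b d ∧ G.Adj a d)
    (hcard : 4 < Fintype.card V)
    (x : Fin 4 → V) (hinj : Function.Injective x)
    (hcyc : ∀ i, G.Adj (x i) (x (i + 1))) :
    (∀ i, ∃! w, G.Adj (x i) w ∧ ∀ j, w ≠ x j) ∧
    (∀ y : Fin 4 → V, (∀ i, G.Adj (x i) (y i) ∧ ∀ j, y i ≠ x j) →
      Function.Injective y ∧
      ∀ c : V → Fin 4, IsTotallySilver G c → ∀ i, c (y i) = c (x (i + 2))) := by
  classical
  have fin4 : ∀ i j : Fin 4, j = i ∨ j = i + 1 ∨ j = i + 2 ∨ j = i + 3 := by decide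
  have e1 : ∀ i : Fin 4, i + 1 + 1 = i + 2 := by decide
  have e2 : ∀ i : Fin 4, i + 3 + 1 = i := by decide
  have e3 : ∀ i : Fin 4, i + 2 + 1 = i + 3 := by decide
  have n1 : ∀ i : Fin 4, i ≠ i + 1 := by decide
  have n2 : ∀ i : Fin 4, i ≠ i + 2 := by decide
  have n3 : ∀ i : Fin 4, i ≠ i + 3 := by decide
  have n13 : ∀ i : Fin 4, i + 1 ≠ i + 3 := by decide
  have n21 : ∀ i : Fin 4, i + 2 ≠ i + 1 := by decide
  have n23 : ∀ i : Fin 4, i + 2 ≠ i + 3 := by decide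
  have pick : ∀ a b c d e : Fin 4, a ≠ b → a ≠ c → b ≠ c →
      d ≠ a → d ≠ b → d ≠ c → e ≠ a → e ≠ b → e ≠ c → d = e := by decide
  have hadj3 : ∀ i : Fin 4, G.Adj (x i) (x (i + 3)) := by
    intro i
    have h := (hcyc (i + 3)).symm
    rwa [e2 i] at h
  have hadj12 : ∀ i : Fin 4, G.Adj (x (i + 1)) (x (i + 2)) := by
    intro i
    have h := hcyc (i + 1)
    rwa [e1 i] at h
  have hadj23 : ∀ i : Fin 4, G.Adj (x (i + 2)) (x (i + 3)) := by
    intro i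
    have h := hcyc (i + 2)
    rwa [e3 i] at h
  have hx2 : ∀ i : Fin 4, ¬ G.Adj (x i) (x (i + 2)) := by
    intro i h
    exact htf ⟨x i, x (i + 1), x (i + 2), hcyc i, hadj12 i, h⟩
  have hdist : ∀ (c : V → Fin 4), IsTotallySilver G c → ∀ u v w : V,
      (u = w ∨ G.Adj w u) → (v = w ∨ G.Adj w v) → u ≠ v → c u ≠ c v := by
    intro c hc u v w hu hv huv he
    obtain ⟨z, _, hz⟩ := hc w (c v)
    exact huv ((hz u ⟨hu, he⟩).trans (hz v ⟨hv, rfl⟩).symm)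
  constructor
  · intro i
    have hdeg : (G.neighborFinset (x i)).card = 3 := by
      rw [SimpleGraph.card_neighborFinset_eq_degree]; exact hreg (x i)
    have hpair : ({x (i + 1), x (i + 3)} : Finset V) ⊆ G.neighborFinset (x i) := by
      intro z hz
      simp only [Finset.mem_insert, Finset.mem_singleton] at hz
      rcases hz with rfl | rfl
      · exact (SimpleGraph.mem_neighborFinset _ _ _).2 (hcyc i)
      · exact (SimpleGraph.mem_neighborFinset _ _ _).2 (hadj3 i)
    have hpc : ({x (i + 1), x (i + 3)} : Finset V).card = 2 := by
      rw [Finset.card_insert_of_notMem, Finset.card_singleton]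
      simp only [Finset.mem_singleton]
      exact hinj.ne (n13 i)
    have hss : ({x (i + 1), x (i + 3)} : Finset V) ⊂ G.neighborFinset (x i) := by
      refine hpair.ssubset_of_ne ?_
      intro h
      rw [h, hdeg] at hpc
      omega
    obtain ⟨w, hw, hwp⟩ := Finset.exists_of_ssubset hss
    have hadjw : G.Adj (x i) w := (SimpleGraph.mem_neighborFinset _ _ _).1 hw
    have hwx : ∀ j, w ≠ x j := by
      intro j hwj
      rcases fin4 i j with rfl | rfl | rfl | rfl
      · exact G.irrefl (hwj ▸ hadjw)
      · exact hwp (by simp [hwj])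
      · exact hx2 i (hwj ▸ hadjw)
      · exact hwp (by simp [hwj])
    refine ⟨w, ⟨hadjw, hwx⟩, ?_⟩
    rintro w' ⟨hadj', hnc'⟩
    have hins : insert w ({x (i + 1), x (i + 3)} : Finset V) ⊆ G.neighborFinset (x i) := by
      intro z hz
      rcases Finset.mem_insert.1 hz with rfl | hz
      · exact hw
      · exact hpair hz
    have hinsc : (insert w ({x (i + 1), x (i + 3)} : Finset V)).card = 3 := by
      rw [Finset.card_insert_of_notMem hwp, hpc]
    have heq : insert w ({x (i + 1), x (i + 3)} : Finset V) = G.neighborFinset (x i) :=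
      Finset.eq_of_subset_of_card_le hins (by rw [hinsc, hdeg])
    have hw' : w' ∈ insert w ({x (i + 1), x (i + 3)} : Finset V) := by
      rw [heq]; exact (SimpleGraph.mem_neighborFinset _ _ _).2 hadj'
    rcases Finset.mem_insert.1 hw' with h | h
    · exact h
    · simp only [Finset.mem_insert, Finset.mem_singleton] at h
      rcases h with h | h
      · exact absurd h (hnc' (i + 1))
      · exact absurd h (hnc' (i + 3))
  · intro y hy
    have main : ∀ c : V → Fin 4, IsTotallySilver G c → ∀ i, c (y i) = c (x (i + 2)) := by
      intro c hc i
      have d1 : c (x i) ≠ c (x (i + 1)) :=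
        hdist c hc _ _ (x i) (Or.inl rfl) (Or.inr (hcyc i)) (hinj.ne (n1 i))
      have d2 : c (x i) ≠ c (x (i + 3)) :=
        hdist c hc _ _ (x i) (Or.inl rfl) (Or.inr (hadj3 i)) (hinj.ne (n3 i))
      have d3 : c (x (i + 1)) ≠ c (x (i + 3)) :=
        hdist c hc _ _ (x i) (Or.inr (hcyc i)) (Or.inr (hadj3 i)) (hinj.ne (n13 i))
      have dy1 : c (y i) ≠ c (x i) :=
        hdist c hc _ _ (x i) (Or.inr (hy i).1) (Or.inl rfl) ((hy i).2 i)
      have dy2 : c (y i) ≠ c (x (i + 1)) :=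
        hdist c hc _ _ (x i) (Or.inr (hy i).1) (Or.inr (hcyc i)) ((hy i).2 (i + 1))
      have dy3 : c (y i) ≠ c (x (i + 3)) :=
        hdist c hc _ _ (x i) (Or.inr (hy i).1) (Or.inr (hadj3 i)) ((hy i).2 (i + 3))
      have de1 : c (x (i + 2)) ≠ c (x i) :=
        hdist c hc _ _ (x (i + 1)) (Or.inr (hadj12 i)) (Or.inr (hcyc i).symm)
          (hinj.ne (Ne.symm (n2 i)))
      have de2 : c (x (i + 2)) ≠ c (x (i + 1)) :=
        hdist c hc _ _ (x (i + 1)) (Or.inr (hadj12 i)) (Or.inl rfl) (hinj.ne (n21 i))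
      have de3 : c (x (i + 2)) ≠ c (x (i + 3)) :=
        hdist c hc _ _ (x (i + 2)) (Or.inl rfl) (Or.inr (hadj23 i)) (hinj.ne (n23 i))
      exact pick (c (x i)) (c (x (i + 1))) (c (x (i + 3))) (c (y i)) (c (x (i + 2)))
        d1 d2 d3 dy1 dy2 dy3 de1 de2 de3
    obtain ⟨c0, hc0⟩ := hsilver
    have hcx : ∀ i j : Fin 4, c0 (x i) = c0 (x j) → i = j := by
      intro i j h
      rcases fin4 i j with rfl | rfl | rfl | rfl
      · rfl
      · exact absurd h
          (hdist c0 hc0 _ _ (x i) (Or.inl rfl) (Or.inr (hcyc i)) (hinj.ne (n1 i)))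
      · exact absurd h
          (hdist c0 hc0 _ _ (x (i + 1)) (Or.inr (hcyc i).symm) (Or.inr (hadj12 i))
            (hinj.ne (n2 i)))
      · exact absurd h
          (hdist c0 hc0 _ _ (x i) (Or.inl rfl) (Or.inr (hadj3 i)) (hinj.ne (n3 i)))
    refine ⟨?_, main⟩
    intro i j hij
    have h2 : c0 (x (i + 2)) = c0 (x (j + 2)) := by
      rw [← main c0 hc0 i, ← main c0 hc0 j, hij]
    have h3 := hcx _ _ h2
    exact add_right_cancel h3
end

section
/- The generalized Petersen graph P(n,1) (the prism over an n-cycle) is totally silver if and only if 4 divides n. -/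
open Fin.NatCast

namespace StmtAux

lemma succ_val {n : ℕ} [NeZero n] (i : Fin n) (hn : 2 ≤ n) :
    (i + 1).val = if i.val + 1 = n then 0 else i.val + 1 := by
  rw [Fin.add_def, Fin.val_one']
  have h1 : 1 % n = 1 := Nat.mod_eq_of_lt (by omega)
  rw [h1]
  have hi := i.isLt
  split_ifs with h
  · simp [h]
  · exact Nat.mod_eq_of_lt (by omega)

lemma pred_val {n : ℕ} [NeZero n] (i : Fin n) (hn : 2 ≤ n) :
    (i - 1).val = if i.val = 0 then n - 1 else i.val - 1 := by
  rw [Fin.sub_def, Fin.val_one']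
  have h1 : 1 % n = 1 := Nat.mod_eq_of_lt (by omega)
  rw [h1]
  have hi := i.isLt
  split_ifs with h
  · rw [h]; simp only [Nat.add_zero]
    exact Nat.mod_eq_of_lt (by omega)
  · have key : (n - 1 + i.val) % n = i.val - 1 := by
      have h5 : n - 1 + i.val = n + (i.val - 1) := by omega
      rw [h5, Nat.add_mod_left]
      exact Nat.mod_eq_of_lt (by omega)
    exact key

lemma adj_iff {n : ℕ} [NeZero n] (hn : 3 ≤ n) (u v : Fin n) :
    (SimpleGraph.cycleGraph n).Adj u v ↔ (v = u + 1 ∨ v = u - 1) := by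
  rw [SimpleGraph.cycleGraph_adj']
  have hu := u.isLt
  have hv := v.isLt
  have h1 : (u - v).val = (n - v.val + u.val) % n := by rw [Fin.sub_def]
  have h2 : (v - u).val = (n - u.val + v.val) % n := by rw [Fin.sub_def]
  have h3 : (n - v.val + u.val) % n = if v.val ≤ u.val then u.val - v.val else n - v.val + u.val := by
    split_ifs with h
    · have : n - v.val + u.val = n + (u.val - v.val) := by omega
      rw [this, Nat.add_mod_left]; exact Nat.mod_eq_of_lt (by omega)
    · exact Nat.mod_eq_of_lt (by omega)
  have h4 : (n - u.val + v.val) % n = if u.val ≤ v.val then v.val - u.val else n - u.val + v.val := by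
    split_ifs with h
    · have : n - u.val + v.val = n + (v.val - u.val) := by omega
      rw [this, Nat.add_mod_left]; exact Nat.mod_eq_of_lt (by omega)
    · exact Nat.mod_eq_of_lt (by omega)
  rw [Fin.ext_iff (a := v) (b := u + 1), Fin.ext_iff (a := v) (b := u - 1),
    succ_val u (by omega), pred_val u (by omega), h1, h2, h3, h4]
  split_ifs <;> omega

lemma fin2_ne {j j' : Fin 2} : j' ≠ j ↔ j' = j + 1 := by revert j j'; decide

lemma mem_iff {n : ℕ} [NeZero n] (hn : 3 ≤ n) (i : Fin n) (j : Fin 2) (w : Fin n × Fin 2) :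
    (w = (i, j) ∨ ((SimpleGraph.cycleGraph n).boxProd (⊤ : SimpleGraph (Fin 2))).Adj (i, j) w) ↔
      (w = (i, j) ∨ w = (i + 1, j) ∨ w = (i - 1, j) ∨ w = (i, j + 1)) := by
  obtain ⟨w1, w2⟩ := w
  simp only [SimpleGraph.boxProd_adj, SimpleGraph.top_adj, Prod.mk.injEq,
    adj_iff hn, ne_eq]
  constructor
  · rintro (⟨h1, h2⟩ | ⟨(h1 | h1), h2⟩ | ⟨h1, h2⟩)
    · exact Or.inl ⟨h1, h2⟩
    · exact Or.inr (Or.inl ⟨h1, h2.symm⟩)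
    · exact Or.inr (Or.inr (Or.inl ⟨h1, h2.symm⟩))
    · exact Or.inr (Or.inr (Or.inr ⟨h2.symm, fin2_ne.mp (fun h => h1 h.symm)⟩))
  · rintro (⟨h1, h2⟩ | ⟨h1, h2⟩ | ⟨h1, h2⟩ | ⟨h1, h2⟩)
    · exact Or.inl ⟨h1, h2⟩
    · exact Or.inr (Or.inl ⟨Or.inl h1, h2.symm⟩)
    · exact Or.inr (Or.inl ⟨Or.inr h1, h2.symm⟩)
    · refine Or.inr (Or.inr ⟨fun h => ?_, h1.symm⟩)
      have := fin2_ne.mpr h2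
      exact this h.symm
  -- note: top_adj direction of symmetry may need adjustment

lemma exu {V : Type*} (c : V → Fin 4) (P : V → Prop) (v0 v1 v2 v3 : V) (t : Fin 4)
    (hmem : ∀ w, P w ↔ (w = v0 ∨ w = v1 ∨ w = v2 ∨ w = v3))
    (h01 : c v0 ≠ c v1) (h02 : c v0 ≠ c v2) (h03 : c v0 ≠ c v3)
    (h12 : c v1 ≠ c v2) (h13 : c v1 ≠ c v3) (h23 : c v2 ≠ c v3) :
    ∃! w, P w ∧ c w = t := by
  have key : ∀ a b d e t : Fin 4, a ≠ b → a ≠ d → a ≠ e → b ≠ d → b ≠ e → d ≠ e →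
      (t = a ∨ t = b ∨ t = d ∨ t = e) := by decide
  have ht := key _ _ _ _ t h01 h02 h03 h12 h13 h23
  rcases ht with ht | ht | ht | ht
  · refine ⟨v0, ⟨(hmem v0).mpr (Or.inl rfl), ht.symm⟩, ?_⟩
    rintro w ⟨hw, hcw⟩
    rcases (hmem w).mp hw with rfl | rfl | rfl | rfl
    · rfl
    · exact absurd (hcw.trans ht).symm h01
    · exact absurd (hcw.trans ht).symm h02
    · exact absurd (hcw.trans ht).symm h03
  · refine ⟨v1, ⟨(hmem v1).mpr (Or.inr (Or.inl rfl)), ht.symm⟩, ?_⟩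
    rintro w ⟨hw, hcw⟩
    rcases (hmem w).mp hw with rfl | rfl | rfl | rfl
    · exact absurd (hcw.trans ht) h01
    · rfl
    · exact absurd (hcw.trans ht).symm h12
    · exact absurd (hcw.trans ht).symm h13
  · refine ⟨v2, ⟨(hmem v2).mpr (Or.inr (Or.inr (Or.inl rfl))), ht.symm⟩, ?_⟩
    rintro w ⟨hw, hcw⟩
    rcases (hmem w).mp hw with rfl | rfl | rfl | rfl
    · exact absurd (hcw.trans ht) h02
    · exact absurd (hcw.trans ht) h12
    · rfl
    · exact absurd (hcw.trans ht).symm h23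
  · refine ⟨v3, ⟨(hmem v3).mpr (Or.inr (Or.inr (Or.inr rfl))), ht.symm⟩, ?_⟩
    rintro w ⟨hw, hcw⟩
    rcases (hmem w).mp hw with rfl | rfl | rfl | rfl
    · exact absurd (hcw.trans ht) h03
    · exact absurd (hcw.trans ht) h13
    · exact absurd (hcw.trans ht) h23
    · rfl

end StmtAux

theorem stmt_13 (n : ℕ) (hn : 3 ≤ n) :
    (∃ c : Fin n × Fin 2 → Fin 4,
      IsTotallySilver ((SimpleGraph.cycleGraph n).boxProd (⊤ : SimpleGraph (Fin 2))) c) ↔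
    4 ∣ n := by
  haveI : NeZero n := ⟨by omega⟩
  set G := (SimpleGraph.cycleGraph n).boxProd (⊤ : SimpleGraph (Fin 2)) with hG
  have e3 : ∀ j : Fin 2, (j + 1).val = 1 - j.val := by decide
  constructor
  · -- forward: coloring exists → 4 ∣ n
    rintro ⟨c, hc⟩
    have uniq : ∀ (v w1 w2 : Fin n × Fin 2), (w1 = v ∨ G.Adj v w1) → (w2 = v ∨ G.Adj v w2) →
        c w1 = c w2 → w1 = w2 := by
      intro v w1 w2 h1 h2 he
      obtain ⟨w, _, hu⟩ := hc v (c w1)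
      rw [hu w1 ⟨h1, rfl⟩, hu w2 ⟨h2, he.symm⟩]
    have cover : ∀ (v : Fin n × Fin 2) (t : Fin 4), ∃ w, (w = v ∨ G.Adj v w) ∧ c w = t :=
      fun v t => (hc v t).exists
    set a : Fin n → Fin 4 := fun i => c (i, 0) with ha
    set b : Fin n → Fin 4 := fun i => c (i, 1) with hb
    have memv : ∀ (i : Fin n) (j : Fin 2), ((i, j) = (i, j) ∨ G.Adj (i, j) (i, j)) := fun _ _ => Or.inl rfl
    have memr : ∀ (i : Fin n) (j : Fin 2), ((i + 1, j) = (i, j) ∨ G.Adj (i, j) (i + 1, j)) :=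
      fun i j => (StmtAux.mem_iff hn i j _).mpr (Or.inr (Or.inl rfl))
    have meml : ∀ (i : Fin n) (j : Fin 2), ((i - 1, j) = (i, j) ∨ G.Adj (i, j) (i - 1, j)) :=
      fun i j => (StmtAux.mem_iff hn i j _).mpr (Or.inr (Or.inr (Or.inl rfl)))
    have memu : ∀ (i : Fin n) (j : Fin 2), ((i, j + 1) = (i, j) ∨ G.Adj (i, j) (i, j + 1)) :=
      fun i j => (StmtAux.mem_iff hn i j _).mpr (Or.inr (Or.inr (Or.inr rfl)))
    have h10 : (1 : Fin 2) + 1 = 0 := by decide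
    have h01 : (0 : Fin 2) + 1 = 1 := by decide
    have memd : ∀ i : Fin n, ((i, (0 : Fin 2)) = (i, 1) ∨ G.Adj (i, 1) (i, 0)) := by
      intro i; have := memu i 1; rwa [h10] at this
    have nsucc : ∀ i : Fin n, i + 1 ≠ i := by
      intro i h
      have h1 := StmtAux.succ_val i (by omega)
      have h2 : (i + 1).val = i.val := by rw [h]
      have := i.isLt
      split_ifs at h1 <;> omega
    have npred : ∀ i : Fin n, i - 1 ≠ i := by
      intro i h
      have h1 := StmtAux.pred_val i (by omega)
      have h2 : (i - 1).val = i.val := by rw [h]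
      have := i.isLt
      split_ifs at h1 <;> omega
    have n2 : ∀ i : Fin n, i + 1 + 1 ≠ i := by
      intro i h
      have h1 := StmtAux.succ_val i (by omega)
      have h1' := StmtAux.succ_val (i + 1) (by omega)
      have h2 : (i + 1 + 1).val = i.val := by rw [h]
      have := i.isLt
      have := (i + 1).isLt
      split_ifs at h1 h1' <;> omega
    have sndne : ((0 : Fin 2)) ≠ 1 := by decide
    have step1 : ∀ i : Fin n, b (i + 1) = a (i - 1) := by
      intro i
      obtain ⟨w, hw, hcw⟩ := cover (i, 0) (b (i + 1))
      rcases (StmtAux.mem_iff hn i 0 w).mp hw with rfl | rfl | rfl | rfl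
      · exfalso
        have h := uniq (i, 1) (i, 0) (i + 1, 1) (memd i) (memr i 1) hcw
        exact sndne (congrArg Prod.snd h)
      · exfalso
        have hv' : ((i + 1, (1 : Fin 2)) = (i + 1, 0) ∨ G.Adj (i + 1, 0) (i + 1, 1)) := by
          have := memu (i + 1) 0; rwa [h01] at this
        have h := uniq (i + 1, 0) (i + 1, 0) (i + 1, 1) (memv (i + 1) 0) hv' hcw
        exact sndne (congrArg Prod.snd h)
      · exact hcw.symm
      · exfalso
        rw [h01] at hcw
        have h := uniq (i, 1) (i, 1) (i + 1, 1) (memv i 1) (memr i 1) hcw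
        exact nsucc i (congrArg Prod.fst h).symm
    have step1' : ∀ i : Fin n, b (i - 1) = a (i + 1) := by
      intro i
      obtain ⟨w, hw, hcw⟩ := cover (i, 0) (b (i - 1))
      rcases (StmtAux.mem_iff hn i 0 w).mp hw with rfl | rfl | rfl | rfl
      · exfalso
        have h := uniq (i, 1) (i, 0) (i - 1, 1) (memd i) (meml i 1) hcw
        exact sndne (congrArg Prod.snd h)
      · exact hcw.symm
      · exfalso
        have hv' : ((i - 1, (1 : Fin 2)) = (i - 1, 0) ∨ G.Adj (i - 1, 0) (i - 1, 1)) := by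
          have := memu (i - 1) 0; rwa [h01] at this
        have h := uniq (i - 1, 0) (i - 1, 0) (i - 1, 1) (memv (i - 1) 0) hv' hcw
        exact sndne (congrArg Prod.snd h)
      · exfalso
        rw [h01] at hcw
        have h := uniq (i, 1) (i, 1) (i - 1, 1) (memv i 1) (meml i 1) hcw
        exact npred i (congrArg Prod.fst h).symm
    have per4 : ∀ i : Fin n, a (i + 1 + 1 + 1 + 1) = a i := by
      intro i
      have e1 := step1' (i + 1 + 1 + 1)
      have e2 := step1 (i + 1)
      rw [add_sub_cancel_right] at e1
      rw [add_sub_cancel_right] at e2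
      rw [← e1, e2]
    have ne1 : ∀ i : Fin n, a (i + 1) ≠ a i := by
      intro i h
      have := uniq (i, 0) (i + 1, 0) (i, 0) (memr i 0) (memv i 0) h
      exact nsucc i (congrArg Prod.fst this)
    have ne2 : ∀ i : Fin n, a (i + 1 + 1) ≠ a i := by
      intro i h
      have hm : ((i, (0 : Fin 2)) = (i + 1, 0) ∨ G.Adj (i + 1, 0) (i, 0)) := by
        have := meml (i + 1) 0; rwa [add_sub_cancel_right] at this
      have := uniq (i + 1, 0) (i + 1 + 1, 0) (i, 0) (memr (i + 1) 0) hm h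
      exact n2 i (congrArg Prod.fst this)
    set g : ℕ → Fin 4 := fun k => a ((k : Fin n)) with hg
    have gstep : ∀ k, g (k + 4) = g k := by
      intro k
      have hcast : ((k + 4 : ℕ) : Fin n) = (k : Fin n) + 1 + 1 + 1 + 1 := by push_cast; open Fin.CommRing in ring
      show a ((k + 4 : ℕ) : Fin n) = a ((k : Fin n))
      rw [hcast]; exact per4 _
    have gper : ∀ m k, g (k + 4 * m) = g k := by
      intro m
      induction m with
      | zero => intro k; simp
      | succ m ih =>
        intro k
        have : k + 4 * (m + 1) = (k + 4) + 4 * m := by ring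
        rw [this, ih (k + 4), gstep k]
    have ga0 : g n = a 0 := by
      show a ((n : Fin n)) = a 0
      rw [Fin.natCast_self]
    have ga1 : g 1 = a (0 + 1) := by
      show a ((1 : ℕ) : Fin n) = a (0 + 1)
      norm_num
    by_contra hnd
    have hn4 : n % 4 = 1 ∨ n % 4 = 2 ∨ n % 4 = 3 := by omega
    rcases hn4 with h4 | h4 | h4
    · have hne : n = 1 + 4 * (n / 4) := by omega
      have : g n = g 1 := by rw [hne]; exact gper (n / 4) 1
      rw [ga0, ga1] at this
      exact ne1 0 this.symm
    · have hne : n = 2 + 4 * (n / 4) := by omega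
      have h2 : g n = g 2 := by rw [hne]; exact gper (n / 4) 2
      have ga2 : g 2 = a (0 + 1 + 1) := by
        show a ((2 : ℕ) : Fin n) = a (0 + 1 + 1)
        have : ((2 : ℕ) : Fin n) = 0 + 1 + 1 := by push_cast; open Fin.CommRing in ring
        rw [this]
      rw [ga0, ga2] at h2
      exact ne2 0 h2.symm
    · have hne : n + 1 = 0 + 4 * (n / 4 + 1) := by omega
      have h2 : g (n + 1) = g 0 := by rw [hne]; exact gper (n / 4 + 1) 0
      have gn1 : g (n + 1) = a (0 + 1) := by
        show a ((n + 1 : ℕ) : Fin n) = a (0 + 1)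
        have : ((n + 1 : ℕ) : Fin n) = 0 + 1 := by push_cast; simp
        rw [this]
      have g0 : g 0 = a 0 := by
        show a ((0 : ℕ) : Fin n) = a 0
        norm_num
      rw [gn1, g0] at h2
      exact ne1 0 h2
  · -- backward: 4 ∣ n → coloring exists
    intro h4
    refine ⟨fun p => ⟨(p.1.val + 2 * p.2.val) % 4, Nat.mod_lt _ (by norm_num)⟩, ?_⟩
    rintro ⟨i, j⟩ t
    have hi := i.isLt
    have hj := j.isLt
    have es := StmtAux.succ_val i (by omega)
    have ep := StmtAux.pred_val i (by omega)
    refine StmtAux.exu _ _ (i, j) (i + 1, j) (i - 1, j) (i, j + 1) t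
      (fun w => StmtAux.mem_iff hn i j w) ?_ ?_ ?_ ?_ ?_ ?_ <;>
    · simp only [Ne, Fin.ext_iff, Prod.fst, Prod.snd, es, ep, e3]
      first
        | (split_ifs <;> omega)
        | omega
end

section
/- For every n ≥ 3 divisible by 3, the graph E_n, consisting of three disjoint n-cycles u_1...u_n, v_1...v_n, w_1...w_n together with vertices z_1,...,z_n where z_i is joined to u_i, v_i, w_i, is cubic and totally silver. -/
/-- The coloring: cycle vertex `(a,i)` gets color `(a+i) mod 3`, hub vertices get `3`. -/
def col (n : ℕ) : (Fin 3 × Fin n) ⊕ Fin n → Fin 4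
  | .inl (a, i) => ⟨(a.val + i.val) % 3, by omega⟩
  | .inr _ => 3

lemma four_helper {V : Type*} (P : V → Prop) (f : V → Fin 4) (a b c d : V)
    (hP : ∀ x, P x ↔ x = a ∨ x = b ∨ x = c ∨ x = d)
    (h1 : f a ≠ f b) (h2 : f a ≠ f c) (h3 : f a ≠ f d)
    (h4 : f b ≠ f c) (h5 : f b ≠ f d) (h6 : f c ≠ f d) :
    ∀ i : Fin 4, ∃! w, P w ∧ f w = i := by
  intro i
  have val_ne : ∀ x y : V, f x ≠ f y → (f x).val ≠ (f y).val := by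
    intro x y h hv; exact h (Fin.ext hv)
  have hv : i = f a ∨ i = f b ∨ i = f c ∨ i = f d := by
    have b1 := (f a).isLt; have b2 := (f b).isLt; have b3 := (f c).isLt
    have b4 := (f d).isLt; have b5 := i.isLt
    have n1 := val_ne _ _ h1; have n2 := val_ne _ _ h2; have n3 := val_ne _ _ h3
    have n4 := val_ne _ _ h4; have n5 := val_ne _ _ h5; have n6 := val_ne _ _ h6
    have : i.val = (f a).val ∨ i.val = (f b).val ∨ i.val = (f c).val ∨ i.val = (f d).val := by
      omega
    rcases this with h | h | h | h
    · exact Or.inl (Fin.ext h)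
    · exact Or.inr (Or.inl (Fin.ext h))
    · exact Or.inr (Or.inr (Or.inl (Fin.ext h)))
    · exact Or.inr (Or.inr (Or.inr (Fin.ext h)))
  rcases hv with rfl | rfl | rfl | rfl
  · refine ⟨a, ⟨(hP a).2 (Or.inl rfl), rfl⟩, ?_⟩
    rintro w ⟨hw, hc⟩
    rcases (hP w).1 hw with rfl | rfl | rfl | rfl
    · rfl
    · exact absurd hc.symm h1
    · exact absurd hc.symm h2
    · exact absurd hc.symm h3
  · refine ⟨b, ⟨(hP b).2 (Or.inr (Or.inl rfl)), rfl⟩, ?_⟩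
    rintro w ⟨hw, hc⟩
    rcases (hP w).1 hw with rfl | rfl | rfl | rfl
    · exact absurd hc h1
    · rfl
    · exact absurd hc.symm h4
    · exact absurd hc.symm h5
  · refine ⟨c, ⟨(hP c).2 (Or.inr (Or.inr (Or.inl rfl))), rfl⟩, ?_⟩
    rintro w ⟨hw, hc⟩
    rcases (hP w).1 hw with rfl | rfl | rfl | rfl
    · exact absurd hc h2
    · exact absurd hc h4
    · rfl
    · exact absurd hc.symm h6
  · refine ⟨d, ⟨(hP d).2 (Or.inr (Or.inr (Or.inr rfl))), rfl⟩, ?_⟩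
    rintro w ⟨hw, hc⟩
    rcases (hP w).1 hw with rfl | rfl | rfl | rfl
    · exact absurd hc h3
    · exact absurd hc h5
    · exact absurd hc h6
    · rfl

theorem stmt_14 (n : ℕ) (hn : 3 ≤ n) (h3 : 3 ∣ n) :
    let E : SimpleGraph ((Fin 3 × Fin n) ⊕ Fin n) := SimpleGraph.fromRel (fun p q =>
      (∃ (a : Fin 3) (i : Fin n), p = Sum.inl (a, i) ∧ q = Sum.inl (a, i + (⟨1, by omega⟩ : Fin n))) ∨
      (∃ (a : Fin 3) (i : Fin n), p = Sum.inl (a, i) ∧ q = Sum.inr i))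
    (∀ v, (E.neighborSet v).ncard = 3) ∧
    ∃ c : (Fin 3 × Fin n) ⊕ Fin n → Fin 4, IsTotallySilver E c := by
  intro E
  haveI : NeZero n := ⟨by omega⟩
  set o : Fin n := ⟨1, by omega⟩ with ho
  -- basic Fin n facts
  have hone : o ≠ 0 := by
    intro h
    have := congrArg Fin.val h
    simp [ho, Fin.val_zero] at this
  have haddne : ∀ i : Fin n, i + o ≠ i := by
    intro i h
    exact hone (by
      have : i + o = i + 0 := by rw [add_zero]; exact h
      exact add_left_cancel this)
  have hsubne : ∀ i : Fin n, i - o ≠ i := by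
    intro i h
    exact hone (sub_eq_self.1 h)
  have key1 : ∀ i : Fin n, (i + o).val % 3 = (i.val + 1) % 3 := by
    intro i
    have : (i + o).val = (i.val + 1) % n := by
      rw [Fin.val_add]
    rw [this, Nat.mod_mod_of_dvd _ h3]
  have key2 : ∀ i : Fin n, (i - o).val % 3 = (i.val + 2) % 3 := by
    intro i
    have hv : (i - o).val = (i.val + (n - 1)) % n := by
      rw [Fin.sub_def]; simp [ho, Nat.add_comm]
    rw [hv, Nat.mod_mod_of_dvd _ h3]
    omega
  -- adjacency characterizations
  have adjL : ∀ (a : Fin 3) (i : Fin n) (x),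
      E.Adj (Sum.inl (a, i)) x ↔
        (x = Sum.inl (a, i + o) ∨ x = Sum.inl (a, i - o) ∨ x = Sum.inr i) := by
    intro a i x
    simp only [E, SimpleGraph.fromRel_adj]
    constructor
    · rintro ⟨hne, h | h⟩
      · rcases h with ⟨a', i', h1, h2⟩ | ⟨a', i', h1, h2⟩
        · injection h1 with h1
          injection h1 with ha hi
          subst ha; subst hi; subst h2
          exact Or.inl rfl
        · injection h1 with h1
          injection h1 with ha hi
          subst ha; subst hi; subst h2
          exact Or.inr (Or.inr rfl)
      · rcases h with ⟨a', i', h1, h2⟩ | ⟨a', i', h1, h2⟩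
        · injection h2 with h2
          injection h2 with ha hi
          subst ha
          have : i' = i - o := eq_sub_of_add_eq hi.symm
          subst this; subst h1
          exact Or.inr (Or.inl rfl)
        · exact absurd h2 (by simp)
    · rintro (rfl | rfl | rfl)
      · refine ⟨?_, Or.inl (Or.inl ⟨a, i, rfl, rfl⟩)⟩
        intro h
        injection h with h
        injection h with _ h
        exact haddne i h.symm
      · refine ⟨?_, Or.inr (Or.inl ⟨a, i - o, rfl, by rw [sub_add_cancel]⟩)⟩
        intro h
        injection h with h
        injection h with _ h
        exact hsubne i h.symm
      · exact ⟨by simp, Or.inl (Or.inr ⟨a, i, rfl, rfl⟩)⟩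
  have adjR : ∀ (i : Fin n) (x),
      E.Adj (Sum.inr i) x ↔ ∃ a : Fin 3, x = Sum.inl (a, i) := by
    intro i x
    simp only [E, SimpleGraph.fromRel_adj]
    constructor
    · rintro ⟨hne, h | h⟩
      · rcases h with ⟨a', i', h1, _⟩ | ⟨a', i', h1, _⟩ <;> exact absurd h1 (by simp)
      · rcases h with ⟨a', i', h1, h2⟩ | ⟨a', i', h1, h2⟩
        · exact absurd h2 (by simp)
        · injection h2 with h2
          subst h2; subst h1
          exact ⟨a', rfl⟩
    · rintro ⟨a, rfl⟩
      exact ⟨by simp, Or.inr (Or.inr ⟨a, i, rfl, rfl⟩)⟩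
  -- vertex distinctness from colors
  have colval : ∀ (a : Fin 3) (i : Fin n), (col n (Sum.inl (a, i))).val = (a.val + i.val) % 3 :=
    fun _ _ => rfl
  have ha3 : ∀ a : Fin 3, a = 0 ∨ a = 1 ∨ a = 2 := by decide
  constructor
  · -- cubic
    intro v
    rcases v with ⟨a, i⟩ | i
    · have hset : E.neighborSet (Sum.inl (a, i)) =
          {Sum.inl (a, i + o), Sum.inl (a, i - o), Sum.inr i} := by
        ext x
        simp only [SimpleGraph.mem_neighborSet, Set.mem_insert_iff, Set.mem_singleton_iff]
        exact adjL a i x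
      rw [hset]
      apply Set.ncard_eq_three.2
      refine ⟨_, _, _, ?_, by simp, by simp, rfl⟩
      · simp only [ne_eq, Sum.inl.injEq, Prod.mk.injEq, Fin.ext_iff]
        intro ⟨_, h⟩
        have k1 := key1 i; have k2 := key2 i
        omega
    · have hset : E.neighborSet (Sum.inr i) =
          {Sum.inl (0, i), Sum.inl (1, i), Sum.inl (2, i)} := by
        ext x
        simp only [SimpleGraph.mem_neighborSet, Set.mem_insert_iff, Set.mem_singleton_iff]
        rw [adjR]
        constructor
        · rintro ⟨a, rfl⟩
          rcases ha3 a with rfl | rfl | rfl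
          · exact Or.inl rfl
          · exact Or.inr (Or.inl rfl)
          · exact Or.inr (Or.inr rfl)
        · rintro (rfl | rfl | rfl)
          exacts [⟨0, rfl⟩, ⟨1, rfl⟩, ⟨2, rfl⟩]
      rw [hset]
      apply Set.ncard_eq_three.2
      exact ⟨_, _, _, by simp [Fin.ext_iff], by simp [Fin.ext_iff], by simp [Fin.ext_iff], rfl⟩
  · -- totally silver
    refine ⟨col n, ?_⟩
    intro v j
    rcases v with ⟨a, i⟩ | i
    · refine four_helper _ (col n) (Sum.inl (a, i)) (Sum.inl (a, i + o)) (Sum.inl (a, i - o))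
        (Sum.inr i) (fun x => ?_) ?_ ?_ ?_ ?_ ?_ ?_ j
      · rw [adjL]
      · intro h
        have h' := congrArg Fin.val h
        rw [colval, colval] at h'
        have k1 := key1 i
        omega
      · intro h
        have h' := congrArg Fin.val h
        rw [colval, colval] at h'
        have k2 := key2 i
        omega
      · intro h
        have h' := congrArg Fin.val h
        rw [colval] at h'
        simp only [col] at h'
        omega
      · intro h
        have h' := congrArg Fin.val h
        rw [colval, colval] at h'
        have k1 := key1 i; have k2 := key2 i
        omega
      · intro h
        have h' := congrArg Fin.val h
        rw [colval] at h'
        simp only [col] at h'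
        omega
      · intro h
        have h' := congrArg Fin.val h
        rw [colval] at h'
        simp only [col] at h'
        omega
    · refine four_helper _ (col n) (Sum.inr i) (Sum.inl (0, i)) (Sum.inl (1, i))
        (Sum.inl (2, i)) (fun x => ?_) ?_ ?_ ?_ ?_ ?_ ?_ j
      · rw [adjR]
        constructor
        · rintro (rfl | ⟨a, rfl⟩)
          · exact Or.inl rfl
          · rcases ha3 a with rfl | rfl | rfl
            · exact Or.inr (Or.inl rfl)
            · exact Or.inr (Or.inr (Or.inl rfl))
            · exact Or.inr (Or.inr (Or.inr rfl))
        · rintro (rfl | rfl | rfl | rfl)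
          exacts [Or.inl rfl, Or.inr ⟨0, rfl⟩, Or.inr ⟨1, rfl⟩, Or.inr ⟨2, rfl⟩]
      all_goals {
        intro h
        have := congrArg Fin.val h
        simp [col] at this
        omega
      }
end

section
/- For every n ≥ 3 not divisible by 3, the graph M_n, consisting of a 3n-cycle u_1u_2...u_{3n}u_1 together with vertices z_1,...,z_n where z_i is joined to u_i, u_{n+i}, u_{2n+i}, is cubic and totally silver. -/
/-- The coloring: cycle vertex `u_j` gets `j % 3`, central vertices get color `3`. -/
def silverC (n : ℕ) : Fin (3 * n) ⊕ Fin n → Fin 4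
  | Sum.inl j => ⟨j.val % 3, by omega⟩
  | Sum.inr _ => 3

lemma silverC_inl (n : ℕ) (j : Fin (3 * n)) : (silverC n (Sum.inl j)).val = j.val % 3 := rfl

lemma silverC_inr (n : ℕ) (i : Fin n) : (silverC n (Sum.inr i)).val = 3 := rfl

/-- Trichotomy for `x % N` when `x < 3 * N`. -/
lemma mod_tri (N x : ℕ) (hN : 0 < N) (h : x < 3 * N) :
    (x < N ∧ x % N = x) ∨ (N ≤ x ∧ x < 2 * N ∧ x % N = x - N) ∨
      (2 * N ≤ x ∧ x % N = x - 2 * N) := by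
  have h1 : x % N < N := Nat.mod_lt _ hN
  have h2 : N * (x / N) + x % N = x := Nat.div_add_mod x N
  have h3 : x / N < 3 := Nat.div_lt_of_lt_mul (by omega)
  set q := x / N with hq
  interval_cases q <;> omega

/-- If the closed neighborhood of `v` is `{w0, w1, w2, w3}` and the colors of these
four vertices are pairwise different, then every color appears exactly once there. -/
lemma silver_helper {V : Type*} (G : SimpleGraph V) (c : V → Fin 4) (v w0 w1 w2 w3 : V)
    (hmem : ∀ w, (w = v ∨ G.Adj v w) ↔ (w = w0 ∨ w = w1 ∨ w = w2 ∨ w = w3))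
    (h01 : c w0 ≠ c w1) (h02 : c w0 ≠ c w2) (h03 : c w0 ≠ c w3)
    (h12 : c w1 ≠ c w2) (h13 : c w1 ≠ c w3) (h23 : c w2 ≠ c w3) :
    ∀ i : Fin 4, ∃! w : V, (w = v ∨ G.Adj v w) ∧ c w = i := by
  intro i
  set f : Fin 4 → V := ![w0, w1, w2, w3] with hf
  have hfv : f 0 = w0 ∧ f 1 = w1 ∧ f 2 = w2 ∧ f 3 = w3 := ⟨rfl, rfl, rfl, rfl⟩
  have hd : ∀ s t : Fin 4, c (f s) = c (f t) → s = t := by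
    intro s t h
    fin_cases s <;> fin_cases t <;>
      simp only [hf, Matrix.cons_val_zero, Matrix.cons_val_one, Matrix.head_cons,
        Matrix.cons_val_two, Matrix.tail_cons, Matrix.cons_val_three, Fin.isValue] at h <;>
      first
        | rfl
        | exact absurd h h01 | exact absurd h h02 | exact absurd h h03
        | exact absurd h h12 | exact absurd h h13 | exact absurd h h23
        | exact absurd h.symm h01 | exact absurd h.symm h02 | exact absurd h.symm h03
        | exact absurd h.symm h12 | exact absurd h.symm h13 | exact absurd h.symm h23
  have hinj : Function.Injective (c ∘ f) := fun s t h => hd s t h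
  have hbij : Function.Bijective (c ∘ f) := Finite.injective_iff_bijective.mp hinj
  obtain ⟨t, ht⟩ := hbij.surjective i
  have hft : f t = w0 ∨ f t = w1 ∨ f t = w2 ∨ f t = w3 := by
    fin_cases t <;> simp [hf]
  refine ⟨f t, ⟨(hmem _).mpr hft, ht⟩, ?_⟩
  rintro w ⟨hw, hcw⟩
  obtain hw0 | hw1 | hw2 | hw3 := (hmem w).mp hw
  · have : (0 : Fin 4) = t := hd 0 t (by rw [hfv.1, ← hw0, hcw]; exact ht.symm)
    rw [hw0, ← hfv.1, this]
  · have : (1 : Fin 4) = t := hd 1 t (by rw [hfv.2.1, ← hw1, hcw]; exact ht.symm)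
    rw [hw1, ← hfv.2.1, this]
  · have : (2 : Fin 4) = t := hd 2 t (by rw [hfv.2.2.1, ← hw2, hcw]; exact ht.symm)
    rw [hw2, ← hfv.2.2.1, this]
  · have : (3 : Fin 4) = t := hd 3 t (by rw [hfv.2.2.2, ← hw3, hcw]; exact ht.symm)
    rw [hw3, ← hfv.2.2.2, this]

theorem stmt_15 (n : ℕ) (hn : 3 ≤ n) (h3 : ¬ 3 ∣ n) :
    let M : SimpleGraph (Fin (3 * n) ⊕ Fin n) := SimpleGraph.fromRel (fun p q =>
      (∃ j : Fin (3 * n), p = Sum.inl j ∧ q = Sum.inl (j + (⟨1, by omega⟩ : Fin (3 * n)))) ∨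
      (∃ i : Fin n, p = Sum.inr i ∧
        (q = Sum.inl ⟨i.val, by have := i.isLt; omega⟩ ∨
         q = Sum.inl ⟨n + i.val, by have := i.isLt; omega⟩ ∨
         q = Sum.inl ⟨2 * n + i.val, by have := i.isLt; omega⟩)))
    (∀ v, (M.neighborSet v).ncard = 3) ∧
    ∃ c : Fin (3 * n) ⊕ Fin n → Fin 4, IsTotallySilver M c := by
  intro M
  have hNpos : 0 < 3 * n := by omega
  have hN9 : 9 ≤ 3 * n := by omega
  set one : Fin (3 * n) := ⟨1, by omega⟩ with hone
  set lst : Fin (3 * n) := ⟨3 * n - 1, by omega⟩ with hlst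
  have hone_val : one.val = 1 := rfl
  have hlst_val : lst.val = 3 * n - 1 := rfl
  -- adjacency characterizations
  have adj_ll : ∀ a b : Fin (3 * n), M.Adj (Sum.inl a) (Sum.inl b) ↔
      (b = a + one ∨ a = b + one) := by
    intro a b
    have hne : ∀ x y : Fin (3 * n), y = x + one → Sum.inl x ≠ (Sum.inl y : Fin (3 * n) ⊕ Fin n) := by
      rintro x y rfl h
      rw [Sum.inl.injEq] at h
      have hv := congrArg Fin.val h
      rw [Fin.val_add] at hv
      have t1 := mod_tri (3 * n) (x.val + one.val) hNpos (by have := x.isLt; omega)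
      have hx := x.isLt
      omega
    constructor
    · intro h
      rw [SimpleGraph.fromRel_adj] at h
      obtain ⟨-, h | h⟩ := h
      · obtain ⟨j, hj1, hj2⟩ | ⟨i, hi, -⟩ := h
        · rw [Sum.inl.injEq] at hj1 hj2; left; rw [hj2, hj1]
        · exact absurd hi (by simp)
      · obtain ⟨j, hj1, hj2⟩ | ⟨i, hi, -⟩ := h
        · rw [Sum.inl.injEq] at hj1 hj2; right; rw [hj2, hj1]
        · exact absurd hi (by simp)
    · intro h
      rw [SimpleGraph.fromRel_adj]
      obtain h | h := h
      · exact ⟨hne a b h, Or.inl (Or.inl ⟨a, rfl, by rw [h]⟩)⟩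
      · exact ⟨(hne b a h).symm, Or.inr (Or.inl ⟨b, rfl, by rw [h]⟩)⟩
  have adj_lr : ∀ (a : Fin (3 * n)) (i : Fin n), M.Adj (Sum.inl a) (Sum.inr i) ↔
      (a.val = i.val ∨ a.val = n + i.val ∨ a.val = 2 * n + i.val) := by
    intro a i
    rw [SimpleGraph.fromRel_adj]
    constructor
    · rintro ⟨-, h | h⟩
      · obtain ⟨j, -, hj2⟩ | ⟨i', hi, -⟩ := h
        · exact absurd hj2 (by simp)
        · exact absurd hi (by simp)
      · obtain ⟨j, hj1, -⟩ | ⟨i', hi, h⟩ := h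
        · exact absurd hj1 (by simp)
        · rw [Sum.inr.injEq] at hi
          subst hi
          obtain h | h | h := h <;> rw [Sum.inl.injEq] at h <;>
            [left; right; right] <;> [skip; left; right] <;>
            exact congrArg Fin.val h
    · intro h
      refine ⟨by simp, Or.inr (Or.inr ⟨i, rfl, ?_⟩)⟩
      obtain h | h | h := h <;> [left; right; right] <;> [skip; left; right] <;>
        exact congrArg Sum.inl (Fin.ext h)
  have adj_rr : ∀ i j : Fin n, ¬ M.Adj (Sum.inr i) (Sum.inr j) := by
    intro i j h
    rw [SimpleGraph.fromRel_adj] at h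
    obtain ⟨-, h | h⟩ := h <;>
      rcases h with ⟨x, hx, hx2⟩ | ⟨x, hx, hx2⟩ <;> simp at hx hx2
  have adj_rl : ∀ (i : Fin n) (a : Fin (3 * n)), M.Adj (Sum.inr i) (Sum.inl a) ↔
      (a.val = i.val ∨ a.val = n + i.val ∨ a.val = 2 * n + i.val) := by
    intro i a
    rw [SimpleGraph.adj_comm]
    exact adj_lr a i
  -- basic arithmetic facts
  have hval_add_one : ∀ a : Fin (3 * n), (a + one).val = (a.val + 1) % (3 * n) := by
    intro a; rw [Fin.val_add]
  have hval_add_lst : ∀ a : Fin (3 * n), (a + lst).val = (a.val + (3 * n - 1)) % (3 * n) := by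
    intro a; rw [Fin.val_add]
  -- `a + lst` is the predecessor
  have pred_iff : ∀ a b : Fin (3 * n), a = b + one ↔ b = a + lst := by
    intro a b
    have ha := a.isLt; have hb := b.isLt
    have t1 := mod_tri (3 * n) (b.val + 1) hNpos (by omega)
    have t2 := mod_tri (3 * n) (a.val + (3 * n - 1)) hNpos (by omega)
    rw [Fin.ext_iff, Fin.ext_iff, hval_add_one, hval_add_lst]
    omega
  have succ_ne_pred : ∀ a : Fin (3 * n), a + one ≠ a + lst := by
    intro a h
    have hv := congrArg Fin.val h
    rw [hval_add_one, hval_add_lst] at hv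
    have ha := a.isLt
    have t1 := mod_tri (3 * n) (a.val + 1) hNpos (by omega)
    have t2 := mod_tri (3 * n) (a.val + (3 * n - 1)) hNpos (by omega)
    omega
  -- the mod-n vertex
  have hmodn : ∀ a : Fin (3 * n), a.val % n < n := fun a => Nat.mod_lt _ (by omega)
  have hmodn_iff : ∀ (a : Fin (3 * n)) (i : Fin n),
      (a.val = i.val ∨ a.val = n + i.val ∨ a.val = 2 * n + i.val) ↔ i.val = a.val % n := by
    intro a i
    have ha := a.isLt; have hi := i.isLt
    have t := mod_tri n a.val (by omega) (by omega)
    omega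
  constructor
  · -- cubic
    rintro (a | i)
    · have hset : M.neighborSet (Sum.inl a) =
          {Sum.inl (a + one), Sum.inl (a + lst), Sum.inr ⟨a.val % n, hmodn a⟩} := by
        ext w
        rcases w with b | j
        · simp only [SimpleGraph.mem_neighborSet, adj_ll, Set.mem_insert_iff,
            Set.mem_singleton_iff, Sum.inl.injEq, reduceCtorEq, or_false]
          rw [pred_iff a b]
        · simp only [SimpleGraph.mem_neighborSet, Set.mem_insert_iff,
            Set.mem_singleton_iff, Sum.inr.injEq, reduceCtorEq, false_or]
          rw [SimpleGraph.adj_comm, adj_rl, hmodn_iff, Fin.ext_iff]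
      rw [hset]
      rw [Set.ncard_insert_of_notMem (by
        simp only [Set.mem_insert_iff, Set.mem_singleton_iff, Sum.inl.injEq, reduceCtorEq,
          or_false]
        exact succ_ne_pred a)]
      rw [Set.ncard_insert_of_notMem (by simp)]
      simp
    · have hset : M.neighborSet (Sum.inr i) =
          {Sum.inl ⟨i.val, by have := i.isLt; omega⟩,
           Sum.inl ⟨n + i.val, by have := i.isLt; omega⟩,
           Sum.inl ⟨2 * n + i.val, by have := i.isLt; omega⟩} := by
        ext w
        rcases w with b | j
        · simp only [SimpleGraph.mem_neighborSet, adj_rl, Set.mem_insert_iff,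
            Set.mem_singleton_iff, Sum.inl.injEq, Fin.ext_iff]
        · simp only [SimpleGraph.mem_neighborSet, Set.mem_insert_iff,
            Set.mem_singleton_iff, reduceCtorEq, or_false]
          simpa using adj_rr i j
      rw [hset]
      have hi := i.isLt
      rw [Set.ncard_insert_of_notMem (by
        simp only [Set.mem_insert_iff, Set.mem_singleton_iff, Sum.inl.injEq, Fin.ext_iff]
        push_neg
        constructor <;> omega)]
      rw [Set.ncard_insert_of_notMem (by
        simp only [Set.mem_singleton_iff, Sum.inl.injEq, Fin.ext_iff]
        omega)]
      simp
  · -- totally silver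
    have hdvd : (3 : ℕ) ∣ 3 * n := ⟨n, rfl⟩
    refine ⟨silverC n, ?_⟩
    rintro (a | i)
    · -- vertex on the cycle
      have ha := a.isLt
      have e1 : (a + one).val % 3 = (a.val + 1) % 3 := by
        rw [hval_add_one, Nat.mod_mod_of_dvd _ hdvd]
      have e2 : (a + lst).val % 3 = (a.val + (3 * n - 1)) % 3 := by
        rw [hval_add_lst, Nat.mod_mod_of_dvd _ hdvd]
      refine silver_helper M (silverC n) (Sum.inl a) (Sum.inl a) (Sum.inl (a + one)) (Sum.inl (a + lst))
        (Sum.inr ⟨a.val % n, hmodn a⟩) ?_ ?_ ?_ ?_ ?_ ?_ ?_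
      · intro w
        rcases w with b | j
        · simp only [Sum.inl.injEq, reduceCtorEq, or_false, adj_ll]
          rw [pred_iff a b]
        · simp only [reduceCtorEq, false_or, Sum.inr.injEq]
          rw [adj_lr, hmodn_iff, Fin.ext_iff]
      all_goals
        intro h
        have hv := congrArg Fin.val h
        simp only [silverC_inl, silverC_inr, e1, e2] at hv
        omega
    · -- central vertex
      have hi := i.isLt
      refine silver_helper M (silverC n) (Sum.inr i) (Sum.inr i)
        (Sum.inl ⟨i.val, by omega⟩)
        (Sum.inl ⟨n + i.val, by omega⟩)
        (Sum.inl ⟨2 * n + i.val, by omega⟩) ?_ ?_ ?_ ?_ ?_ ?_ ?_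
      · intro w
        rcases w with b | j
        · simp only [reduceCtorEq, false_or, Sum.inl.injEq, adj_rl, Fin.ext_iff]
        · simp only [Sum.inr.injEq, reduceCtorEq, or_false]
          have := adj_rr i j
          constructor
          · rintro (rfl | h)
            · rfl
            · exact absurd h this
          · rintro rfl; left; rfl
      all_goals
        intro h
        have hv := congrArg Fin.val h
        simp only [silverC_inl, silverC_inr] at hv
        omega
end

section
/- The Möbius ladder V_{2n} is totally silver if and only if n ≡ 2 (mod 4). -/
private lemma mod_cases (N x : ℕ) (hx : x < 2*N) :
    (x < N ∧ x % N = x) ∨ (N ≤ x ∧ x % N = x - N) := by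
  rcases lt_or_ge x N with h | h
  · exact Or.inl ⟨h, Nat.mod_eq_of_lt h⟩
  · exact Or.inr ⟨h, by rw [Nat.mod_eq_sub_mod h, Nat.mod_eq_of_lt (by omega)]⟩

private lemma quad4 (a b c d : Fin 4) (h : ∀ i : Fin 4, a = i ∨ b = i ∨ c = i ∨ d = i) :
    a ≠ b ∧ a ≠ c ∧ a ≠ d ∧ b ≠ c ∧ b ≠ d ∧ c ≠ d ∧ d.val = a.val ^^^ b.val ^^^ c.val := by
  revert a b c d; decide

private lemma step_key (a b c d e : Fin 4)
    (h : c.val = (a.val ^^^ b.val ^^^ c.val) ^^^ (b.val ^^^ c.val ^^^ d.val) ^^^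
      (c.val ^^^ d.val ^^^ e.val)) : a = e := by
  revert a b c d e; decide

section mob
variable (n : ℕ) (hn : 2 ≤ n)

private lemma L0 (hn : 2 ≤ n) : 0 < 2*n := by omega
private lemma L1 (hn : 2 ≤ n) : 1 < 2*n := by omega
private lemma L2 (hn : 2 ≤ n) : 2 < 2*n := by omega
private lemma Ln (hn : 2 ≤ n) : n < 2*n := by omega
private lemma Lm (hn : 2 ≤ n) : 2*n-1 < 2*n := by omega
private lemma Lm2 (hn : 2 ≤ n) : 2*n-2 < 2*n := by omega

private lemma fin_mk_add (a b r : ℕ) (ha : a < 2*n) (hb : b < 2*n) (hr : r < 2*n)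
    (h : (a + b) % (2*n) = r) :
    (⟨a, ha⟩ : Fin (2*n)) + ⟨b, hb⟩ = ⟨r, hr⟩ := by
  apply Fin.ext
  simp only [Fin.val_add, Fin.val_mk]
  exact h

private lemma fin_mk_add_zero [NeZero (2*n)] (a b : ℕ) (ha : a < 2*n) (hb : b < 2*n)
    (h : (a + b) % (2*n) = 0) :
    (⟨a, ha⟩ : Fin (2*n)) + ⟨b, hb⟩ = 0 := by
  apply Fin.ext
  simp only [Fin.val_add, Fin.val_mk, Fin.val_zero]
  exact h

private lemma ne_add_mk (a : ℕ) (ha : a < 2*n) (ha' : 0 < a) (v : Fin (2*n)) :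
    v ≠ v + ⟨a, ha⟩ := by
  intro h
  have hv := congrArg Fin.val h
  simp only [Fin.val_add, Fin.val_mk] at hv
  have := mod_cases (2*n) (v.val + a) (by omega)
  have := v.isLt
  omega

private lemma mob_mem (v w : Fin (2*n)) :
    (w = v ∨ (SimpleGraph.fromRel (fun a b =>
      b = a + (⟨1, L1 n hn⟩ : Fin (2 * n)) ∨ b = a + (⟨n, Ln n hn⟩ : Fin (2 * n)))).Adj v w) ↔
      (w = v ∨ w = v + ⟨1, L1 n hn⟩ ∨ w = v + ⟨n, Ln n hn⟩ ∨ w = v + ⟨2*n-1, Lm n hn⟩) := by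
  haveI : NeZero (2*n) := ⟨by omega⟩
  have He1m : (⟨1, L1 n hn⟩ : Fin (2*n)) + ⟨2*n-1, Lm n hn⟩ = 0 :=
    fin_mk_add_zero n _ _ _ _ (by
      have := mod_cases (2*n) (1 + (2*n-1)) (by omega); omega)
  have Hem1 : (⟨2*n-1, Lm n hn⟩ : Fin (2*n)) + ⟨1, L1 n hn⟩ = 0 :=
    fin_mk_add_zero n _ _ _ _ (by
      have := mod_cases (2*n) ((2*n-1) + 1) (by omega); omega)
  have Henn : (⟨n, Ln n hn⟩ : Fin (2*n)) + ⟨n, Ln n hn⟩ = 0 :=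
    fin_mk_add_zero n _ _ _ _ (by
      have := mod_cases (2*n) (n + n) (by omega); omega)
  rw [show ((SimpleGraph.fromRel (fun a b =>
      b = a + (⟨1, L1 n hn⟩ : Fin (2 * n)) ∨ b = a + (⟨n, Ln n hn⟩ : Fin (2 * n)))).Adj v w) ↔
      v ≠ w ∧ ((w = v + ⟨1, L1 n hn⟩ ∨ w = v + ⟨n, Ln n hn⟩) ∨
        (v = w + ⟨1, L1 n hn⟩ ∨ v = w + ⟨n, Ln n hn⟩)) from SimpleGraph.fromRel_adj _ v w]
  constructor
  · rintro (h | ⟨hne, (h | h) | (h | h)⟩)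
    · exact Or.inl h
    · exact Or.inr (Or.inl h)
    · exact Or.inr (Or.inr (Or.inl h))
    · refine Or.inr (Or.inr (Or.inr ?_))
      rw [h, add_assoc, He1m, add_zero]
    · refine Or.inr (Or.inr (Or.inl ?_))
      rw [h, add_assoc, Henn, add_zero]
  · rintro (h | h | h | h)
    · exact Or.inl h
    · exact Or.inr ⟨(h ▸ ne_add_mk n _ _ (by omega) v), Or.inl (Or.inl h)⟩
    · exact Or.inr ⟨(h ▸ ne_add_mk n _ _ (by omega) v), Or.inl (Or.inr h)⟩
    · refine Or.inr ⟨(h ▸ ne_add_mk n _ _ (by omega) v), Or.inr (Or.inl ?_)⟩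
      rw [h, add_assoc, Hem1, add_zero]

open Fin.NatCast in
private lemma mob_forward (c : Fin (2*n) → Fin 4)
    (hc : IsTotallySilver (SimpleGraph.fromRel (fun a b =>
      b = a + (⟨1, L1 n hn⟩ : Fin (2 * n)) ∨ b = a + (⟨n, Ln n hn⟩ : Fin (2 * n)))) c) :
    n % 4 = 2 := by
  haveI : NeZero (2*n) := ⟨by omega⟩
  -- the rainbow quad at each vertex
  have hquad : ∀ (u : Fin (2*n)) (i : Fin 4),
      c (u + ⟨2*n-1, Lm n hn⟩) = i ∨ c u = i ∨ c (u + ⟨1, L1 n hn⟩) = i ∨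
        c (u + ⟨n, Ln n hn⟩) = i := by
    intro u i
    obtain ⟨w, ⟨hw, hcw⟩, -⟩ := hc u i
    rcases (mob_mem n hn u w).1 hw with h | h | h | h
    · subst h; exact Or.inr (Or.inl hcw)
    · subst h; exact Or.inr (Or.inr (Or.inl hcw))
    · subst h; exact Or.inr (Or.inr (Or.inr hcw))
    · subst h; exact Or.inl hcw
  -- explicit index arithmetic on Fin (2*n)
  have comp : ∀ (u : Fin (2*n)) (a b r : ℕ) (ha : a < 2*n) (hb : b < 2*n) (hr : r < 2*n),
      (a + b) % (2*n) = r → u + ⟨a, ha⟩ + ⟨b, hb⟩ = u + ⟨r, hr⟩ := by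
    intro u a b r ha hb hr h
    apply Fin.ext
    simp only [Fin.val_add, Fin.val_mk, Nat.mod_add_mod]
    rw [Nat.add_assoc, ← Nat.add_mod_mod, h]
  have add0 : ∀ u : Fin (2*n), u + (⟨0, L0 n hn⟩ : Fin (2*n)) = u := by
    intro u
    apply Fin.ext
    simp only [Fin.val_add, Fin.val_mk, Nat.add_zero]
    exact Nat.mod_eq_of_lt u.isLt
  have Emm : ∀ u : Fin (2*n), u + ⟨2*n-1, Lm n hn⟩ + ⟨2*n-1, Lm n hn⟩ = u + ⟨2*n-2, Lm2 n hn⟩ :=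
    fun u => comp u _ _ _ _ _ _ (by
      have := mod_cases (2*n) ((2*n-1) + (2*n-1)) (by omega); omega)
  have Em1 : ∀ u : Fin (2*n), u + ⟨2*n-1, Lm n hn⟩ + ⟨1, L1 n hn⟩ = u :=
    fun u => (comp u _ _ 0 _ _ (by omega) (by
      have := mod_cases (2*n) ((2*n-1) + 1) (by omega); omega)).trans (add0 u)
  have E1m : ∀ u : Fin (2*n), u + ⟨1, L1 n hn⟩ + ⟨2*n-1, Lm n hn⟩ = u :=
    fun u => (comp u _ _ 0 _ _ (by omega) (by
      have := mod_cases (2*n) (1 + (2*n-1)) (by omega); omega)).trans (add0 u)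
  have Enn : ∀ u : Fin (2*n), u + ⟨n, Ln n hn⟩ + ⟨n, Ln n hn⟩ = u :=
    fun u => (comp u _ _ 0 _ _ (by omega) (by
      have := mod_cases (2*n) (n + n) (by omega); omega)).trans (add0 u)
  have E11 : ∀ u : Fin (2*n), u + ⟨1, L1 n hn⟩ + ⟨1, L1 n hn⟩ = u + ⟨2, L2 n hn⟩ :=
    fun u => comp u _ _ _ _ _ _ (by
      have := mod_cases (2*n) (1 + 1) (by omega); omega)
  have Enm : ∀ u : Fin (2*n),
      u + ⟨n, Ln n hn⟩ + ⟨2*n-1, Lm n hn⟩ = u + ⟨2*n-1, Lm n hn⟩ + ⟨n, Ln n hn⟩ :=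
    fun u => (comp u _ _ (n-1) _ _ (by omega) (by
      have := mod_cases (2*n) (n + (2*n-1)) (by omega); omega)).trans
      (comp u _ _ (n-1) _ _ (by omega) (by
      have := mod_cases (2*n) ((2*n-1) + n) (by omega); omega)).symm
  have En1 : ∀ u : Fin (2*n),
      u + ⟨n, Ln n hn⟩ + ⟨1, L1 n hn⟩ = u + ⟨1, L1 n hn⟩ + ⟨n, Ln n hn⟩ :=
    fun u => (comp u _ _ (n+1) _ _ (by omega) (by
      have := mod_cases (2*n) (n + 1) (by omega); omega)).trans
      (comp u _ _ (n+1) _ _ (by omega) (by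
      have := mod_cases (2*n) (1 + n) (by omega); omega)).symm
  have E2m2 : ∀ u : Fin (2*n), u + ⟨2, L2 n hn⟩ + ⟨2*n-2, Lm2 n hn⟩ = u :=
    fun u => (comp u _ _ 0 _ _ (by omega) (by
      have := mod_cases (2*n) (2 + (2*n-2)) (by omega); omega)).trans (add0 u)
  have E4 : ∀ u : Fin (2*n), u + ⟨2, L2 n hn⟩ + ⟨2, L2 n hn⟩ = u + ((4 : ℕ) : Fin (2*n)) := by
    intro u
    apply Fin.ext
    simp only [Fin.val_add, Fin.val_mk, Fin.val_natCast, Nat.mod_add_mod, Nat.add_mod_mod]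
  -- the Klein-group relation at each vertex
  have hx : ∀ u : Fin (2*n),
      (c (u + ⟨n, Ln n hn⟩)).val =
        (c (u + ⟨2*n-1, Lm n hn⟩)).val ^^^ (c u).val ^^^ (c (u + ⟨1, L1 n hn⟩)).val :=
    fun u => (quad4 _ _ _ _ (hquad u)).2.2.2.2.2.2
  -- period four
  have hstep : ∀ u : Fin (2*n), c (u + ⟨2*n-2, Lm2 n hn⟩) = c (u + ⟨2, L2 n hn⟩) := by
    intro u
    have h2 := hx (u + ⟨2*n-1, Lm n hn⟩)
    rw [Emm u, Em1 u] at h2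
    have h3 := hx u
    have h4 := hx (u + ⟨1, L1 n hn⟩)
    rw [E1m u, E11 u] at h4
    have h1 := hx (u + ⟨n, Ln n hn⟩)
    rw [Enn u, Enm u, En1 u] at h1
    rw [h2, h3, h4] at h1
    exact step_key _ _ _ _ _ h1
  have hne2 : ∀ v : Fin (2*n), c v ≠ c (v + ⟨2, L2 n hn⟩) := by
    intro v
    have h := (quad4 _ _ _ _ (hquad (v + ⟨1, L1 n hn⟩))).2.1
    rwa [E1m v, E11 v] at h
  have hnen : ∀ v : Fin (2*n), c v ≠ c (v + ⟨n, Ln n hn⟩) :=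
    fun v => (quad4 _ _ _ _ (hquad v)).2.2.2.2.1
  have hper : ∀ v : Fin (2*n), c (v + ((4 : ℕ) : Fin (2*n))) = c v := by
    intro v
    have h := hstep (v + ⟨2, L2 n hn⟩)
    rw [E2m2 v, E4 v] at h
    exact h.symm
  have hperk : ∀ (k : ℕ) (v : Fin (2*n)), c (v + ((4*k : ℕ) : Fin (2*n))) = c v := by
    intro k
    induction k with
    | zero =>
        intro v
        rw [show ((4*0 : ℕ) : Fin (2*n)) = (⟨0, L0 n hn⟩ : Fin (2*n)) from
          Fin.ext (by rw [Fin.val_natCast, Fin.val_mk]; norm_num), add0 v]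
    | succ k ih =>
        intro v
        have hc4 : ((4*(k+1) : ℕ) : Fin (2*n)) =
            ((4*k : ℕ) : Fin (2*n)) + ((4 : ℕ) : Fin (2*n)) := by
          apply Fin.ext
          simp only [Fin.val_add, Fin.val_natCast]
          rw [← Nat.add_mod, show 4*(k+1) = 4*k + 4 from by omega]
        rw [hc4, ← add_assoc, hper, ih]
  -- rule out all residues except 2
  by_contra hne
  rcases (by omega : n % 4 = 0 ∨ n % 2 = 1) with h0 | h1
  · obtain ⟨m, hm⟩ : ∃ m, n = 4*m := ⟨n/4, by omega⟩
    have hen : (⟨n, Ln n hn⟩ : Fin (2*n)) = ((4*m : ℕ) : Fin (2*n)) := by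
      apply Fin.ext
      rw [Fin.val_mk, Fin.val_natCast, Nat.mod_eq_of_lt (by omega)]
      omega
    have hp := hperk m 0
    have hq := hnen 0
    rw [hen] at hq
    exact hq hp.symm
  · obtain ⟨m, hm⟩ : ∃ m, 2*n = 4*m + 2 := ⟨n/2, by omega⟩
    have hEz : ∀ u : Fin (2*n), u + ⟨2, L2 n hn⟩ + ((4*m : ℕ) : Fin (2*n)) = u := by
      intro u
      apply Fin.ext
      simp only [Fin.val_add, Fin.val_mk, Fin.val_natCast, Nat.mod_add_mod, Nat.add_mod_mod]
      rw [show u.val + 2 + 4*m = u.val + 2*n from by omega, Nat.add_mod_right]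
      exact Nat.mod_eq_of_lt u.isLt
    have hp := hperk m ((0 : Fin (2*n)) + ⟨2, L2 n hn⟩)
    rw [hEz 0] at hp
    exact hne2 0 hp

private lemma mob_backward (h2 : n % 4 = 2) :
    ∃ c : Fin (2*n) → Fin 4, IsTotallySilver (SimpleGraph.fromRel (fun a b =>
      b = a + (⟨1, L1 n hn⟩ : Fin (2 * n)) ∨ b = a + (⟨n, Ln n hn⟩ : Fin (2 * n)))) c := by
  haveI : NeZero (2*n) := ⟨by omega⟩
  have hdvd : 4 ∣ 2*n := by omega
  refine ⟨fun v => ⟨v.val % 4, Nat.mod_lt _ (by norm_num)⟩, ?_⟩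
  intro v i
  set c : Fin (2*n) → Fin 4 := fun v => ⟨v.val % 4, Nat.mod_lt _ (by norm_num)⟩ with hcdef
  have hcv : ∀ w : Fin (2*n), (c w).val = w.val % 4 := fun w => rfl
  have hv1 : (v + (⟨1, L1 n hn⟩ : Fin (2*n))).val % 4 = (v.val + 1) % 4 := by
    rw [Fin.val_add, Fin.val_mk]; exact Nat.mod_mod_of_dvd _ hdvd
  have hv2 : (v + (⟨n, Ln n hn⟩ : Fin (2*n))).val % 4 = (v.val + n) % 4 := by
    rw [Fin.val_add, Fin.val_mk]; exact Nat.mod_mod_of_dvd _ hdvd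
  have hv3 : (v + (⟨2*n-1, Lm n hn⟩ : Fin (2*n))).val % 4 = (v.val + (2*n-1)) % 4 := by
    rw [Fin.val_add, Fin.val_mk]; exact Nat.mod_mod_of_dvd _ hdvd
  have hvlt := v.isLt
  have huniq : ∀ w1 w2 : Fin (2*n),
      (w1 = v ∨ w1 = v + ⟨1, L1 n hn⟩ ∨ w1 = v + ⟨n, Ln n hn⟩ ∨ w1 = v + ⟨2*n-1, Lm n hn⟩) →
      (w2 = v ∨ w2 = v + ⟨1, L1 n hn⟩ ∨ w2 = v + ⟨n, Ln n hn⟩ ∨ w2 = v + ⟨2*n-1, Lm n hn⟩) →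
      (c w1).val = (c w2).val → w1 = w2 := by
    rintro w1 w2 (rfl | rfl | rfl | rfl) (rfl | rfl | rfl | rfl) hcc <;>
      simp only [hcv, hv1, hv2, hv3] at hcc <;>
      first
        | rfl
        | (exfalso; omega)
  have hex : v.val % 4 = i.val ∨ (v.val + 1) % 4 = i.val ∨ (v.val + n) % 4 = i.val ∨
      (v.val + (2*n-1)) % 4 = i.val := by
    have := i.isLt; omega
  rcases hex with he | he | he | he
  · refine ⟨v, ⟨(mob_mem n hn v v).2 (Or.inl rfl), Fin.ext (by rw [hcv]; exact he)⟩, ?_⟩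
    rintro w' ⟨hm', hcw'⟩
    exact huniq w' v ((mob_mem n hn v w').1 hm') (Or.inl rfl)
      (by rw [hcw', hcv]; exact he.symm)
  · refine ⟨v + ⟨1, L1 n hn⟩, ⟨(mob_mem n hn v _).2 (Or.inr (Or.inl rfl)),
      Fin.ext (by rw [hcv, hv1]; exact he)⟩, ?_⟩
    rintro w' ⟨hm', hcw'⟩
    exact huniq w' _ ((mob_mem n hn v w').1 hm') (Or.inr (Or.inl rfl))
      (by rw [hcw', hcv, hv1]; exact he.symm)
  · refine ⟨v + ⟨n, Ln n hn⟩, ⟨(mob_mem n hn v _).2 (Or.inr (Or.inr (Or.inl rfl))),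
      Fin.ext (by rw [hcv, hv2]; exact he)⟩, ?_⟩
    rintro w' ⟨hm', hcw'⟩
    exact huniq w' _ ((mob_mem n hn v w').1 hm') (Or.inr (Or.inr (Or.inl rfl)))
      (by rw [hcw', hcv, hv2]; exact he.symm)
  · refine ⟨v + ⟨2*n-1, Lm n hn⟩, ⟨(mob_mem n hn v _).2 (Or.inr (Or.inr (Or.inr rfl))),
      Fin.ext (by rw [hcv, hv3]; exact he)⟩, ?_⟩
    rintro w' ⟨hm', hcw'⟩
    exact huniq w' _ ((mob_mem n hn v w').1 hm') (Or.inr (Or.inr (Or.inr rfl)))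
      (by rw [hcw', hcv, hv3]; exact he.symm)

end mob

theorem stmt_16 (n : ℕ) (hn : 2 ≤ n) :
    let Mob : SimpleGraph (Fin (2 * n)) := SimpleGraph.fromRel (fun a b =>
      b = a + (⟨1, by omega⟩ : Fin (2 * n)) ∨ b = a + (⟨n, by omega⟩ : Fin (2 * n)))
    (∃ c : Fin (2 * n) → Fin 4, IsTotallySilver Mob c) ↔ n % 4 = 2 := by
  intro Mob
  constructor
  · rintro ⟨c, hc⟩
    exact mob_forward n hn c hc
  · intro h
    exact mob_backward n hn h
end

section
/- If c is a totally silver coloring of a graph G, then c'(u,i) := c(u) defines a totally silver coloring of the bipartite double cover G × K_2. -/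
/-- The bipartite double cover \`G × K₂\`. -/
def doubleCover {V : Type*} (G : SimpleGraph V) : SimpleGraph (V × Bool) where
  Adj a b := G.Adj a.1 b.1 ∧ a.2 ≠ b.2
  symm := ⟨fun a b h => ⟨h.1.symm, h.2.symm⟩⟩
  loopless := ⟨fun a h => h.2 rfl⟩

theorem stmt_17 {V : Type*} (G : SimpleGraph V) {k : ℕ} (c : V → Fin k)
    (hc : IsTotallySilver G c) :
    IsTotallySilver (doubleCover G) (fun p => c p.1) := by
  classical
  rintro ⟨v, b⟩ i
  obtain ⟨w, ⟨hw1, hw2⟩, hw3⟩ := hc v i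
  refine ⟨(w, if w = v then b else !b), ⟨?_, hw2⟩, ?_⟩
  · rcases hw1 with h | h
    · subst h; left; simp
    · right
      have hne : w ≠ v := fun e => G.loopless.irrefl v (e ▸ h)
      exact ⟨h, by simp [hne]⟩
  · rintro ⟨u, d⟩ ⟨hu, hcu⟩
    rcases hu with h | h
    · have h1 : u = v := congrArg Prod.fst h
      have h2 : d = b := congrArg Prod.snd h
      have huw : u = w := hw3 u ⟨Or.inl h1, hcu⟩
      subst huw; subst h1; subst h2
      simp
    · obtain ⟨hadj, hne⟩ := h
      have huw : u = w := hw3 u ⟨Or.inr hadj, hcu⟩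
      subst huw
      have hne2 : u ≠ v := fun e => G.loopless.irrefl v (e ▸ hadj)
      have : d = !b := by cases b <;> cases d <;> simp_all
      simp [hne2, this]
end

section
/- Let n ≥ 1 and let G be the cubic graph obtained from a 3n-cycle x_1...x_{3n} and vertices z_1,...,z_n by partitioning {x_1,...,x_{3n}} into sets X_1,...,X_n of size 3 each, where no X_i contains two vertices x_j, x_k with j ≡ k (mod 3), and joining z_i to the three vertices of X_i. Then G is totally silver. -/
theorem stmt_19 (n : ℕ) (hn : 1 ≤ n)
    (X : Fin n → Finset (Fin (3 * n)))
    (hcardX : ∀ i, (X i).card = 3)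
    (hpart : ∀ j : Fin (3 * n), ∃! i, j ∈ X i)
    (hmod : ∀ i, ∀ j ∈ X i, ∀ k ∈ X i, j ≠ k → (j : ℕ) % 3 ≠ (k : ℕ) % 3) :
    let G : SimpleGraph (Fin (3 * n) ⊕ Fin n) := SimpleGraph.fromRel (fun p q =>
      (∃ j : Fin (3 * n), p = Sum.inl j ∧ q = Sum.inl (j + (⟨1, by omega⟩ : Fin (3 * n)))) ∨
      (∃ (i : Fin n) (j : Fin (3 * n)), p = Sum.inr i ∧ q = Sum.inl j ∧ j ∈ X i))
    ∃ c : Fin (3 * n) ⊕ Fin n → Fin 4, IsTotallySilver G c := by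
  intro G
  haveI : NeZero (3 * n) := ⟨by omega⟩
  have hdvd : (3 : ℕ) ∣ 3 * n := ⟨n, rfl⟩
  set e1 : Fin (3 * n) := ⟨1, by omega⟩ with he1
  -- residue lemmas
  have hadd : ∀ j : Fin (3 * n), ((j + e1 : Fin (3 * n)) : ℕ) % 3 = ((j : ℕ) + 1) % 3 := by
    intro j
    rw [Fin.add_def]
    simp only [he1]
    rw [Nat.mod_mod_of_dvd _ hdvd]
  have hsub : ∀ j : Fin (3 * n), ((j - e1 : Fin (3 * n)) : ℕ) % 3 = ((j : ℕ) + 2) % 3 := by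
    intro j
    rw [Fin.sub_def]
    simp only [he1]
    rw [Nat.mod_mod_of_dvd _ hdvd]
    omega
  have hsubadd : ∀ j : Fin (3 * n), j - e1 + e1 = j := fun j => sub_add_cancel j e1
  have hne : ∀ j : Fin (3 * n), j ≠ j + e1 := by
    intro j h
    have h0 : e1 = 0 := left_eq_add.mp h
    have h1 : (1 : ℕ) = 0 := by simpa [he1, Fin.ext_iff] using h0
    omega
  -- adjacency characterizations
  have hAdj_ll : ∀ j k : Fin (3 * n), G.Adj (Sum.inl j) (Sum.inl k) ↔ (k = j + e1 ∨ j = k + e1) := by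
    intro j k
    constructor
    · rintro ⟨hne', h | h⟩
      · rcases h with ⟨j', hj', hk'⟩ | ⟨i, j', hj', _⟩
        · left; cases hj'; cases hk'; rfl
        · exact absurd hj' (by simp)
      · rcases h with ⟨j', hj', hk'⟩ | ⟨i, j', hj', _⟩
        · right; cases hj'; cases hk'; rfl
        · exact absurd hj' (by simp)
    · rintro (rfl | rfl)
      · exact ⟨by simp [hne j], Or.inl (Or.inl ⟨j, rfl, rfl⟩)⟩
      · exact ⟨by simpa using (hne k).symm, Or.inr (Or.inl ⟨k, rfl, rfl⟩)⟩
  have hAdj_rl : ∀ (i : Fin n) (j : Fin (3 * n)), G.Adj (Sum.inr i) (Sum.inl j) ↔ j ∈ X i := by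
    intro i j
    constructor
    · rintro ⟨hne', h | h⟩
      · rcases h with ⟨j', hj', _⟩ | ⟨i', j', hi', hj', hmem⟩
        · exact absurd hj' (by simp)
        · cases hi'; cases hj'; exact hmem
      · rcases h with ⟨j', hj', hk'⟩ | ⟨i', j', hi', _, _⟩
        · exact absurd hk' (by simp)
        · exact absurd hi' (by simp)
    · intro hmem
      exact ⟨by simp, Or.inl (Or.inr ⟨i, j, rfl, rfl, hmem⟩)⟩
  have hAdj_rr : ∀ i i' : Fin n, ¬ G.Adj (Sum.inr i) (Sum.inr i') := by
    rintro i i' ⟨hne', h | h⟩ <;>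
      rcases h with ⟨j', _, hj'⟩ | ⟨i'', j', _, hj', _⟩ <;> exact absurd hj' (by simp)
  -- the coloring
  refine ⟨Sum.elim (fun j => ⟨(j : ℕ) % 3, by omega⟩) (fun _ => 3), ?_⟩
  intro v t
  -- existence of element of X i with given residue
  have hres : ∀ (i : Fin n) (r : ℕ), r < 3 → ∃ k ∈ X i, (k : ℕ) % 3 = r := by
    intro i r hr
    have himg : (X i).image (fun k : Fin (3 * n) => (k : ℕ) % 3) = Finset.range 3 := by
      apply Finset.eq_of_subset_of_card_le
      · intro x hx
        simp only [Finset.mem_image] at hx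
        obtain ⟨k, _, rfl⟩ := hx
        simp only [Finset.mem_range]
        omega
      · rw [Finset.card_range, Finset.card_image_of_injOn, hcardX]
        intro a ha b hb hab
        by_contra h
        exact hmod i a ha b hb h hab
    have : r ∈ (X i).image (fun k : Fin (3 * n) => (k : ℕ) % 3) := by
      rw [himg]; exact Finset.mem_range.mpr hr
    simpa using this
  cases v with
  | inl j =>
    by_cases ht : (t : ℕ) = 3
    · -- color 3: the unique hub
      obtain ⟨i, hji, hiuniq⟩ := hpart j
      refine ⟨Sum.inr i, ⟨Or.inr ((hAdj_rl i j).mpr hji).symm,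
        by simp only [Sum.elim_inr]; exact Fin.ext (by rw [ht]; rfl)⟩, ?_⟩
      rintro w ⟨hw, hcw⟩
      cases w with
      | inl k => simp [Fin.ext_iff, ht] at hcw; omega
      | inr i' =>
        rcases hw with h | h
        · exact absurd h (by simp)
        · congr 1
          exact hiuniq i' ((hAdj_rl i' j).mp h.symm)
    · -- color < 3: among j-1, j, j+1
      have ht3 : (t : ℕ) < 3 := by have := t.isLt; omega
      have key : ∀ w : Fin (3 * n) ⊕ Fin n,
          ((w = Sum.inl j ∨ G.Adj (Sum.inl j) w) ∧
            Sum.elim (fun j : Fin (3*n) => (⟨(j : ℕ) % 3, by omega⟩ : Fin 4)) (fun _ => 3) w = t)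
          ↔ (w = Sum.inl j ∧ (j : ℕ) % 3 = t) ∨ (w = Sum.inl (j + e1) ∧ ((j : ℕ) + 1) % 3 = t)
            ∨ (w = Sum.inl (j - e1) ∧ ((j : ℕ) + 2) % 3 = t) := by
        intro w
        cases w with
        | inr i => simp [Fin.ext_iff]; omega
        | inl k =>
          constructor
          · rintro ⟨hw, hcw⟩
            have hcw' : (k : ℕ) % 3 = (t : ℕ) := by
              simpa using congrArg Fin.val hcw
            rcases hw with h | h
            · obtain rfl : k = j := Sum.inl.inj h
              exact Or.inl ⟨rfl, hcw'⟩
            · rcases (hAdj_ll j k).mp h with rfl | h2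
              · exact Or.inr (Or.inl ⟨rfl, by rw [← hadd j]; exact hcw'⟩)
              · have hk : k = j - e1 := by rw [h2]; simp
                subst hk
                exact Or.inr (Or.inr ⟨rfl, by rw [← hsub j]; exact hcw'⟩)
          · rintro (⟨h, hr⟩ | ⟨h, hr⟩ | ⟨h, hr⟩) <;> obtain rfl := Sum.inl.inj h
            · exact ⟨Or.inl rfl, Fin.ext hr⟩
            · exact ⟨Or.inr ((hAdj_ll j _).mpr (Or.inl rfl)),
                Fin.ext (by simpa [hadd j] using hr)⟩
            · exact ⟨Or.inr ((hAdj_ll j _).mpr (Or.inr (hsubadd j).symm)),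
                Fin.ext (by simpa [hsub j] using hr)⟩
      -- pick the right witness
      have hd1 : ((j : ℕ) % 3 = t ∨ ((j : ℕ) + 1) % 3 = t ∨ ((j : ℕ) + 2) % 3 = t) := by omega
      rcases hd1 with h | h | h
      · refine ⟨Sum.inl j, (key _).mpr (Or.inl ⟨rfl, h⟩), ?_⟩
        rintro w hw
        rcases (key w).mp hw with ⟨rfl, _⟩ | ⟨rfl, h2⟩ | ⟨rfl, h2⟩ <;> first | rfl | omega
      · refine ⟨Sum.inl (j + e1), (key _).mpr (Or.inr (Or.inl ⟨rfl, h⟩)), ?_⟩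
        rintro w hw
        rcases (key w).mp hw with ⟨rfl, h2⟩ | ⟨rfl, _⟩ | ⟨rfl, h2⟩ <;> first | rfl | omega
      · refine ⟨Sum.inl (j - e1), (key _).mpr (Or.inr (Or.inr ⟨rfl, h⟩)), ?_⟩
        rintro w hw
        rcases (key w).mp hw with ⟨rfl, h2⟩ | ⟨rfl, h2⟩ | ⟨rfl, _⟩ <;> first | rfl | omega
  | inr i =>
    by_cases ht : (t : ℕ) = 3
    · refine ⟨Sum.inr i, ⟨Or.inl rfl,
        by simp only [Sum.elim_inr]; exact Fin.ext (by rw [ht]; rfl)⟩, ?_⟩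
      rintro w ⟨hw, hcw⟩
      cases w with
      | inl k => simp [Fin.ext_iff, ht] at hcw; omega
      | inr i' =>
        rcases hw with h | h
        · exact h
        · exact absurd h (hAdj_rr i i')
    · have ht3 : (t : ℕ) < 3 := by have := t.isLt; omega
      obtain ⟨k, hk, hkr⟩ := hres i t ht3
      refine ⟨Sum.inl k, ⟨Or.inr ((hAdj_rl i k).mpr hk), by simp [Fin.ext_iff, hkr]⟩, ?_⟩
      rintro w ⟨hw, hcw⟩
      cases w with
      | inr i' => simp [Fin.ext_iff] at hcw; omega
      | inl k' =>
        rcases hw with h | h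
        · exact absurd h (by simp)
        · have hk' : k' ∈ X i := (hAdj_rl i k').mp h
          have hck' : (k' : ℕ) % 3 = t := by simpa [Fin.ext_iff] using hcw
          congr 1
          by_contra hne'
          exact hmod i k' hk' k hk hne' (by omega)
end
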